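/- arXiv:1106.2753 — 3 statements merged into one kernel-verified Lean document; each statement's English description precedes it below -/
import Mathlib

section
/- For every k ≥ 0, p(7k+5) ≡ 0 (mod 7). -/
set_option linter.unreachableTactic false
set_option linter.unnecessarySeqFocus false
set_option linter.unusedTactic false

namespace Ram7
open Polynomial Finset

/-- triangular numbers -/
def T : ℕ → ℕ
  | 0 => 0
  | n + 1 => T n + n + 1

lemma T_succ (n : ℕ) : T (n+1) = T n + n + 1 := rfl

/-- Gaussian binomial `[n choose k]_q` as an integer polynomial. -/
noncomputable def gb : ℕ → ℕ → Polynomial ℤ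
  | 0, k => if k = 0 then 1 else 0
  | n+1, k =>
    match k with
    | 0 => 1
    | k+1 => gb n (k+1) + X ^ (n - k) * gb n k

@[simp] lemma gb_zero_right : ∀ n, gb n 0 = 1
  | 0 => rfl
  | _+1 => rfl

lemma gb_pascalA (n k : ℕ) : gb (n+1) (k+1) = gb n (k+1) + X ^ (n - k) * gb n k := rfl

lemma gb_eq_zero : ∀ {n k}, n < k → gb n k = 0
  | 0, _+1, _ => by simp [gb]
  | n+1, k+1, h => by
      rw [gb_pascalA, gb_eq_zero (show n < k+1 by omega), gb_eq_zero (show n < k by omega)]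
      ring

@[simp] lemma gb_self : ∀ n, gb n n = 1
  | 0 => rfl
  | n+1 => by
      rw [gb_pascalA, gb_eq_zero (show n < n+1 by omega), gb_self n]
      simp

lemma gb_one : ∀ n, gb n 1 = ∑ i ∈ range n, X ^ i
  | 0 => by simp [gb]
  | n+1 => by
      rw [gb_pascalA, gb_one n, gb_zero_right, Finset.sum_range_succ]
      simp

lemma geom_shift (m : ℕ) :
    ∑ i ∈ range (m+1), (X : Polynomial ℤ) ^ i = X * ∑ i ∈ range m, X ^ i + 1 := by
  rw [Finset.sum_range_succ' (fun i => (X : Polynomial ℤ) ^ i) m, Finset.mul_sum]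
  simp [pow_succ, mul_comm]

lemma gb_pascalB : ∀ n k, gb (n+1) (k+1) = X ^ (k+1) * gb n (k+1) + gb n k
  | 0, 0 => by simp [gb]
  | 0, k+1 => by
      rw [gb_pascalA]
      rw [gb_eq_zero (show 0 < k+2 by omega), gb_eq_zero (show 0 < k+1 by omega)]
      ring
  | n+1, 0 => by
      show gb (n+2) 1 = X ^ 1 * gb (n+1) 1 + gb (n+1) 0
      rw [gb_one, gb_one, gb_zero_right, geom_shift]
      ring
  | n+1, k+1 => by
      rcases le_or_gt (k+1) n with h | h
      · rw [gb_pascalA (n+1) (k+1), show n+1-(k+1) = n-k by omega]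
        have B1 := gb_pascalB n (k+1)
        have B2 := gb_pascalB n k
        have A1 := gb_pascalA n (k+1)
        have A2 := gb_pascalA n k
        have hX1 : (X : Polynomial ℤ)^(k+1+1) * X^(n-(k+1)) = X^(n-k) * X^(k+1) := by
          rw [← pow_add, ← pow_add]
          congr 1
          omega
        linear_combination B1 - X^(k+1+1) * A1 + X^(n-k) * B2 - A2 - (gb n (k+1)) * hX1
      · rcases Nat.eq_or_lt_of_le h with h' | h'
        · have hk : k = n := by omega
          subst hk
          rw [gb_pascalA, gb_eq_zero (show k+1 < k+2 by omega)]
          simp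
        · rw [gb_eq_zero (show n+1+1 < k+1+1 by omega), gb_eq_zero (show n+1 < k+1+1 by omega),
            gb_eq_zero (show n+1 < k+1 by omega)]
          ring

/-- partial Euler product `(q;q)_n` -/
noncomputable def pochZ (n : ℕ) : Polynomial ℤ := ∏ i ∈ range n, (1 - X ^ (i+1))

lemma pochZ_succ (n : ℕ) : pochZ (n+1) = pochZ n * (1 - X ^ (n+1)) := by
  rw [pochZ, pochZ, Finset.prod_range_succ]

@[simp] lemma pochZ_zero : pochZ 0 = 1 := by simp [pochZ]

lemma gb_mul_poch : ∀ n r, r ≤ n → gb n r * (pochZ r * pochZ (n - r)) = pochZ n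
  | 0, 0, _ => by simp
  | n+1, 0, _ => by simp
  | n+1, r+1, h => by
      rcases Nat.eq_or_lt_of_le h with h' | h'
      · cases h'
        simp
      · obtain ⟨a, rfl⟩ : ∃ a, n = a + (r+1) := ⟨n - (r+1), by omega⟩
        have IH1 := gb_mul_poch (a+r+1) (r+1) (by omega)
        have IH2 := gb_mul_poch (a+r+1) r (by omega)
        rw [show a+r+1 - (r+1) = a by omega, pochZ_succ r] at IH1
        rw [show a+r+1 - r = a + 1 by omega, pochZ_succ a] at IH2
        rw [show a + (r+1) + 1 = (a+r+1)+1 by omega, show (a+r+1)+1 - (r+1) = a+1 by omega,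
          gb_pascalA (a+r+1) r, show a+r+1 - r = a+1 by omega,
          pochZ_succ r, pochZ_succ a, pochZ_succ (a+r+1)]
        have hX : (X : Polynomial ℤ)^(a+1) * X^(r+1) = X^(a+r+1+1) := by
          rw [← pow_add]
          congr 1
          omega
        linear_combination (1 - X^(a+1)) * IH1 + X^(a+1)*(1 - X^(r+1)) * IH2 - pochZ (a+r+1) * hX


/-- exponent `T((t-n-1 : ℤ))` -/
def e (n t : ℕ) : ℕ := if n + 1 ≤ t then T (t - (n+1)) else T (n - t)

/-- the `t`-th coefficient (in `z`) of the finite Jacobi triple product at level `n`. -/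
noncomputable def c (n t : ℕ) : Polynomial ℤ :=
  if t ≤ 2*n+1 then X ^ (e n t) * gb (2*n+1) (2*n+1 - t) else 0

lemma c_of_le {n t : ℕ} (h : t ≤ 2*n+1) : c n t = X ^ (e n t) * gb (2*n+1) (2*n+1-t) :=
  if_pos h

lemma c_of_gt {n t : ℕ} (h : 2*n+1 < t) : c n t = 0 := if_neg (by omega)

lemma e_succ_succ (n t : ℕ) : e (n+1) (t+1) = e n t := by
  by_cases h : n + 1 ≤ t
  · simp only [e]
    rw [if_pos (by omega), if_pos h, show t+1-(n+1+1) = t - (n+1) by omega]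
  · simp only [e]
    rw [if_neg (by omega), if_neg (by omega), show n+1-(t+1) = n - t by omega]

lemma e_add1 (n t : ℕ) : e n (t+1) + (t+2) = (n+1) + e n (t+2) := by
  rcases lt_trichotomy t n with h | h | h
  · rcases Nat.eq_or_lt_of_le h with h' | h'
    · -- t + 1 = n
      have h1 : e n (t+1) = T 0 := by
        simp only [e]; rw [if_neg (by omega)]; congr 1 <;> omega
      have h2 : e n (t+2) = T 0 := by
        simp only [e]; rw [if_pos (by omega)]; congr 1 <;> omega
      rw [h1, h2]; simp [T]; omega
    · -- t + 2 ≤ n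
      have h1 : e n (t+1) = T (n-t-2) + (n-t-2) + 1 := by
        have h1' : e n (t+1) = T ((n-t-2)+1) := by
          simp only [e]; rw [if_neg (by omega)]; congr 1 <;> omega
        rw [h1', T_succ]
      have h2 : e n (t+2) = T (n-t-2) := by
        simp only [e]; rw [if_neg (by omega)]; congr 1 <;> omega
      rw [h1, h2]
      generalize T (n-t-2) = x
      omega
  · subst h
    have h1 : e t (t+1) = T 0 := by
      simp only [e]; rw [if_pos (by omega)]; congr 1 <;> omega
    have h2 : e t (t+2) = T 0 + 0 + 1 := by
      have h2' : e t (t+2) = T (0+1) := by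
        simp only [e]; rw [if_pos (by omega)]; congr 1 <;> omega
      rw [h2', T_succ]
    rw [h1, h2]; simp [T]
  · -- n < t
    have h1 : e n (t+1) = T (t-n) := by
      simp only [e]; rw [if_pos (by omega)]; congr 1 <;> omega
    have h2 : e n (t+2) = T (t-n) + (t-n) + 1 := by
      have h2' : e n (t+2) = T ((t-n)+1) := by
        simp only [e]; rw [if_pos (by omega)]; congr 1 <;> omega
      rw [h2', T_succ]
    rw [h1, h2]
    generalize T (t-n) = x
    omega

lemma e_add2 (n t : ℕ) (ht : t ≤ 2*n+1) : e n (t+1) + (2*n+1-t) = (n+1) + e n t := by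
  rcases lt_trichotomy t n with h | h | h
  · have h1 : e n (t+1) = T (n-t-1) := by
      simp only [e]; rw [if_neg (by omega)]; congr 1 <;> omega
    have h2 : e n t = T (n-t-1) + (n-t-1) + 1 := by
      have h2' : e n t = T ((n-t-1)+1) := by
        simp only [e]; rw [if_neg (by omega)]; congr 1 <;> omega
      rw [h2', T_succ]
    rw [h1, h2]
    generalize T (n-t-1) = x
    omega
  · subst h
    have h1 : e t (t+1) = T 0 := by
      simp only [e]; rw [if_pos (by omega)]; congr 1 <;> omega
    have h2 : e t t = T 0 := by
      simp only [e]; rw [if_neg (by omega)]; congr 1 <;> omega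
    rw [h1, h2]; simp [T]; omega
  · have h1 : e n (t+1) = T (t-n-1) + (t-n-1) + 1 := by
      simp only [e]; rw [if_pos (by omega), show t+1-(n+1) = (t-n-1)+1 by omega, T_succ]
    have h2 : e n t = T (t-n-1) := by
      simp only [e]; rw [if_pos (by omega)]; congr 1 <;> omega
    rw [h1, h2]
    generalize T (t-n-1) = x
    omega

lemma e_zero (n : ℕ) : e n 0 = T n := by
  simp only [e]; rw [if_neg (by omega), Nat.sub_zero]

lemma gb_triple {m r : ℕ} (h : r + 1 ≤ m) :
    gb (m+2) (r+2) = (1 + X^(m+1)) * gb m (r+1) + X^(m-r) * gb m r + X^(r+2) * gb m (r+2) := by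
  rw [gb_pascalA (m+1) (r+1), gb_pascalB m (r+1), gb_pascalB m r,
    show m+1-(r+1) = m-r by omega]
  have hX : (X : Polynomial ℤ)^(m-r) * X^(r+1) = X^(m+1) := by
    rw [← pow_add]; congr 1; omega
  linear_combination (gb m (r+1)) * hX

lemma gb_mm1 : ∀ m, gb (m+1) m = ∑ i ∈ range (m+1), X ^ i
  | 0 => by simp [gb]
  | m+1 => by
    rw [gb_pascalA (m+1) m, gb_self, gb_mm1 m, show m+1-m = 1 by omega, geom_shift (m+1)]
    ring

/-- the key recursion, main case -/
lemma c_rec (n t : ℕ) :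
    c (n+1) (t+2) = X^(n+1) * c n (t+2) + (1 + X^(2*n+2)) * c n (t+1) + X^(n+1) * c n t := by
  rcases le_or_gt (t+2) (2*n+1) with h | h
  · -- main case
    obtain ⟨r, hr⟩ : ∃ r, 2*n+1-t = r + 2 := ⟨2*n-1-t, by omega⟩
    rw [c_of_le (show t+2 ≤ 2*(n+1)+1 by omega), c_of_le (by omega : t+2 ≤ 2*n+1),
      c_of_le (by omega : t+1 ≤ 2*n+1), c_of_le (by omega : t ≤ 2*n+1)]
    rw [show 2*(n+1)+1 - (t+2) = r+2 by omega, show 2*(n+1)+1 = (2*n+1)+2 by omega,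
      gb_triple (show r+1 ≤ 2*n+1 by omega),
      show 2*n+1-(t+1) = r+1 by omega, show 2*n+1-(t+2) = r by omega, hr,
      e_succ_succ n (t+1)]
    have hX2 : (X : Polynomial ℤ)^(e n (t+1)) * X^(2*n+1-r) = X^(n+1) * X^(e n (t+2)) := by
      rw [← pow_add, ← pow_add]; congr 1
      have := e_add1 n t
      omega
    have hX3 : (X : Polynomial ℤ)^(e n (t+1)) * X^(r+2) = X^(n+1) * X^(e n t) := by
      rw [← pow_add, ← pow_add]; congr 1
      have := e_add2 n t (by omega)
      omega
    linear_combination (gb (2*n+1) r) * hX2 + (gb (2*n+1) (r+2)) * hX3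
  · rcases le_or_gt (t+2) (2*n+3) with h2 | h2
    · rcases Nat.eq_or_lt_of_le h2 with h3 | h3
      · -- t + 2 = 2n+3, i.e. t = 2n+1
        have ht : t = 2*n+1 := by omega
        subst ht
        rw [c_of_le (by omega), c_of_gt (by omega), c_of_gt (by omega), c_of_le (by omega)]
        rw [show 2*(n+1)+1 - (2*n+1+2) = 0 by omega, gb_zero_right,
          show 2*n+1 - (2*n+1) = 0 by omega, gb_zero_right,
          show (2*n+1) + 2 = (2*(n+1)+1) by omega]
        have hE : e (n+1) (2*(n+1)+1) = T n + n + 1 := by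
          simp only [e]; rw [if_pos (by omega), show 2*(n+1)+1-(n+1+1) = n+1 by omega, T_succ]
        have hE2 : e n (2*n+1) = T n := by
          simp only [e]; rw [if_pos (by omega)]; congr 1 <;> omega
        rw [hE, hE2]
        have hp : (X : Polynomial ℤ)^(T n + n + 1) = X^(n+1) * X^(T n) := by
          rw [← pow_add]; congr 1; omega
        rw [hp]
        ring
      ·
        have ht : t = 2*n := by omega
        subst ht
        rw [c_of_le (by omega), c_of_gt (by omega), c_of_le (by omega), c_of_le (by omega)]
        rw [show 2*(n+1)+1 - (2*n+2) = 1 by omega,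
          show 2*n+1 - (2*n+1) = 0 by omega, gb_zero_right,
          show 2*n+1 - 2*n = 1 by omega]
        have hE1 : e (n+1) (2*n+2) = T n := by
          simp only [e]; rw [if_pos (by omega)]; congr 1 <;> omega
        have hE2 : e n (2*n+1) = T n := by
          simp only [e]; rw [if_pos (by omega)]; congr 1 <;> omega
        have hE3 : e n (2*n) = T (n-1) := by
          cases n with
          | zero => simp [e, T]
          | succ k =>
            simp only [e]; rw [if_pos (by omega)]; congr 1 <;> omega
        rw [hE1, hE2, hE3]
        rw [show (2*(n+1)+1) = (2*n+2)+1 by omega, gb_one, show 2*n+1 = (2*n)+1 by omega, gb_one]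
        have hsum : ∑ i ∈ range (2*n+2+1), (X : Polynomial ℤ)^i
            = 1 + X^(2*n+2) + X * ∑ i ∈ range (2*n+1), X^i := by
          rw [Finset.sum_range_succ, show 2*n+2 = (2*n+1)+1 by omega, geom_shift]
          ring
        have hX4 : (X : Polynomial ℤ)^(n+1) * X^(T (n-1)) = X^(T n) * X := by
          rw [← pow_add, ← pow_succ]; congr 1
          cases n with
          | zero => simp [T]
          | succ k => rw [show k+1-1 = k by omega, T_succ]; omega
        linear_combination X^(T n) * hsum - (∑ i ∈ range (2*n+1), (X:Polynomial ℤ)^i) * hX4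
    · -- t ≥ 2n+2 : everything vanishes
      rw [c_of_gt (by omega), c_of_gt (by omega), c_of_gt (by omega), c_of_gt (by omega)]
      ring

lemma c_rec1 (n : ℕ) : c (n+1) 1 = X^(n+1) * c n 1 + (1 + X^(2*n+2)) * c n 0 := by
  rw [c_of_le (by omega), c_of_le (by omega), c_of_le (by omega)]
  rw [show 2*(n+1)+1 - 1 = (2*n+2) by omega, show 2*n+1-1 = 2*n by omega,
    show 2*n+1-0 = 2*n+1 by omega, gb_self]
  rw [show 2*(n+1)+1 = (2*n+2)+1 by omega, gb_mm1 (2*n+2), show 2*n+1 = (2*n)+1 by omega,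
    gb_mm1 (2*n)]
  have hE1 : e (n+1) 1 = T n := by
    simp only [e]; rw [if_neg (by omega)]; congr 1 <;> omega
  have hE2 : e n 1 = T (n-1) := by
    cases n with
    | zero => simp [e, T]
    | succ k => simp only [e]; rw [if_neg (by omega)]
  rw [hE1, hE2, e_zero]
  have hsum : ∑ i ∈ range (2*n+2+1), (X : Polynomial ℤ)^i
      = 1 + X^(2*n+2) + X * ∑ i ∈ range (2*n+1), X^i := by
    rw [Finset.sum_range_succ, show 2*n+2 = (2*n+1)+1 by omega, geom_shift]
    ring
  have hX4 : (X : Polynomial ℤ)^(n+1) * X^(T (n-1)) = X^(T n) * X := by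
    rw [← pow_add, ← pow_succ]; congr 1
    cases n with
    | zero => simp [T]
    | succ k => rw [show k+1-1 = k by omega, T_succ]; omega
  rw [show (2*n)+1 = 2*n+1 from rfl]
  linear_combination X^(T n) * hsum - (∑ i ∈ range (2*n+1), (X:Polynomial ℤ)^i) * hX4

lemma c_rec0 (n : ℕ) : c (n+1) 0 = X^(n+1) * c n 0 := by
  rw [c_of_le (by omega), c_of_le (by omega), e_zero, e_zero]
  rw [show 2*(n+1)+1 - 0 = 2*(n+1)+1 by omega, show 2*n+1-0 = 2*n+1 by omega,
    gb_self, gb_self, mul_one, mul_one, T_succ]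
  rw [show T n + n + 1 = (n+1) + T n by omega, pow_add]


lemma shift1 (m : ℕ) (g : ℕ → Polynomial ℤ) :
    ∑ t ∈ range m, g (t+1) = (∑ t ∈ range m, g t) + g m - g 0 := by
  induction m with
  | zero => simp
  | succ k ih =>
    rw [Finset.sum_range_succ (fun t => g (t+1)) k, ih, Finset.sum_range_succ g k]
    ring

lemma shift2 (m : ℕ) (g : ℕ → Polynomial ℤ) :
    ∑ t ∈ range m, g (t+2) = (∑ t ∈ range m, g t) + g m + g (m+1) - g 0 - g 1 := by
  have h1 := shift1 m (fun t => g (t+1))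
  have h2 := shift1 m g
  linear_combination h1 + h2

lemma peel2 (m : ℕ) (h : ℕ → Polynomial ℤ) :
    ∑ t ∈ range (m+2), h t = (∑ t ∈ range m, h (t+2)) + h 1 + h 0 := by
  show ∑ t ∈ range (m+1+1), h t = _
  rw [Finset.sum_range_succ' h (m+1), Finset.sum_range_succ' (fun t => h (t+1)) m]

lemma c00 : c 0 0 = 1 := by
  rw [c_of_le (by omega), e_zero]
  norm_num
  simp [T]

lemma c01 : c 0 1 = 1 := by
  rw [c_of_le (by omega)]
  rw [show (2*0+1 : ℕ) = 1 by norm_num, show (1-1 : ℕ) = 0 by norm_num]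
  simp [e, T, gb]

noncomputable def S0 (n : ℕ) : Polynomial ℤ :=
  ∑ t ∈ range (2*n+2), (-1 : Polynomial ℤ)^t * c n t

noncomputable def SS (n : ℕ) : Polynomial ℤ :=
  ∑ t ∈ range (2*n+2), (-1 : Polynomial ℤ)^t * (t : Polynomial ℤ) * c n t

lemma S0_eq_zero : ∀ n, S0 n = 0
  | 0 => by
    rw [S0, show 2*0+2 = 2 by norm_num, Finset.sum_range_succ, Finset.sum_range_succ,
      Finset.sum_range_zero, c00, c01]
    ring
  | n+1 => by
    have g2 := shift2 (2*n+2) (fun t => (-1 : Polynomial ℤ)^t * c n t)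
    have g1 := shift1 (2*n+2) (fun t => (-1 : Polynomial ℤ)^t * c n t)
    have hz1 : c n (2*n+2) = 0 := c_of_gt (by omega)
    have hz2 : c n (2*n+2+1) = 0 := c_of_gt (by omega)
    have ih := S0_eq_zero n
    rw [S0] at ih
    rw [S0, show 2*(n+1)+2 = (2*n+2)+2 by ring,
      peel2 (2*n+2) (fun t => (-1 : Polynomial ℤ)^t * c (n+1) t)]
    have hsum : ∀ t ∈ range (2*n+2), (-1 : Polynomial ℤ)^(t+2) * c (n+1) (t+2)
        = X^(n+1) * ((-1)^(t+2) * c n (t+2)) - (1+X^(2*n+2)) * ((-1)^(t+1) * c n (t+1))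
          + X^(n+1) * ((-1)^t * c n t) := by
      intro t _
      rw [c_rec]
      ring
    rw [Finset.sum_congr rfl hsum]
    rw [Finset.sum_add_distrib, Finset.sum_sub_distrib, ← Finset.mul_sum, ← Finset.mul_sum,
      ← Finset.mul_sum]
    rw [c_rec1, c_rec0]
    linear_combination (X^(n+1) : Polynomial ℤ) * g2 - (1+X^(2*n+2)) * g1
      + (2*X^(n+1) - 1 - X^(2*n+2)) * ih
      + (X^(n+1) * (-1 : Polynomial ℤ)^(2*n+2)) * hz1
      + (X^(n+1) * (-1 : Polynomial ℤ)^(2*n+2+1)) * hz2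
      - ((1+X^(2*n+2)) * (-1 : Polynomial ℤ)^(2*n+2)) * hz1

lemma SS_succ (n : ℕ) : SS (n+1) = -(1-X^(n+1))^2 * SS n := by
  have G2 := shift2 (2*n+2) (fun t => (-1 : Polynomial ℤ)^t * (t : Polynomial ℤ) * c n t)
  have G1 := shift1 (2*n+2) (fun t => (-1 : Polynomial ℤ)^t * (t : Polynomial ℤ) * c n t)
  have g1 := shift1 (2*n+2) (fun t => (-1 : Polynomial ℤ)^t * c n t)
  have hz1 : c n (2*n+2) = 0 := c_of_gt (by omega)
  have hz2 : c n (2*n+2+1) = 0 := c_of_gt (by omega)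
  have ih0 := S0_eq_zero n
  rw [S0] at ih0
  rw [SS, SS, show 2*(n+1)+2 = (2*n+2)+2 by ring,
    peel2 (2*n+2) (fun t => (-1 : Polynomial ℤ)^t * (t : Polynomial ℤ) * c (n+1) t)]
  have hsum : ∀ t ∈ range (2*n+2),
      (-1 : Polynomial ℤ)^(t+2) * ((t+2 : ℕ) : Polynomial ℤ) * c (n+1) (t+2)
      = X^(n+1) * ((-1)^(t+2) * ((t+2 : ℕ) : Polynomial ℤ) * c n (t+2))
        - (1+X^(2*n+2)) * ((-1)^(t+1) * ((t+1 : ℕ) : Polynomial ℤ) * c n (t+1))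
        - (1+X^(2*n+2)) * ((-1)^(t+1) * c n (t+1))
        + X^(n+1) * ((-1)^t * (t : Polynomial ℤ) * c n t)
        + (2*X^(n+1)) * ((-1)^t * c n t) := by
    intro t _
    rw [c_rec]
    push_cast
    ring
  rw [Finset.sum_congr rfl hsum]
  rw [Finset.sum_add_distrib, Finset.sum_add_distrib, Finset.sum_sub_distrib,
    Finset.sum_sub_distrib, ← Finset.mul_sum, ← Finset.mul_sum, ← Finset.mul_sum,
    ← Finset.mul_sum, ← Finset.mul_sum]
  rw [c_rec1, c_rec0]
  simp only [Nat.cast_zero, Nat.cast_one]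
  linear_combination (X^(n+1) : Polynomial ℤ) * G2 - (1+X^(2*n+2)) * G1 - (1+X^(2*n+2)) * g1
    + (2*X^(n+1) - 1 - X^(2*n+2)) * ih0
    + (X^(n+1) * (-1 : Polynomial ℤ)^(2*n+2) * ((2*n+2 : ℕ) : Polynomial ℤ)) * hz1
    + (X^(n+1) * (-1 : Polynomial ℤ)^(2*n+2+1) * ((2*n+2+1 : ℕ) : Polynomial ℤ)) * hz2
    - ((1+X^(2*n+2)) * (-1 : Polynomial ℤ)^(2*n+2) * ((2*n+2 : ℕ) : Polynomial ℤ)) * hz1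
    - ((1+X^(2*n+2)) * (-1 : Polynomial ℤ)^(2*n+2)) * hz1

lemma SS_eq : ∀ n, SS n = (-1)^(n+1) * (pochZ n)^2
  | 0 => by
    rw [SS, show 2*0+2 = 2 by norm_num, Finset.sum_range_succ, Finset.sum_range_succ,
      Finset.sum_range_zero, c00, c01]
    simp
  | n+1 => by
    rw [SS_succ, SS_eq n, pochZ_succ]
    ring

open PowerSeries

instance fact7 : Fact (Nat.Prime 7) := ⟨by norm_num⟩

/-- the map from integer polynomials to power series mod 7 -/
noncomputable def Φ : Polynomial ℤ →+* PowerSeries (ZMod 7) :=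
  (PowerSeries.map (Int.castRingHom (ZMod 7))).comp Polynomial.coeToPowerSeries.ringHom

lemma Φ_X : Φ X = PowerSeries.X := by
  rw [Φ, RingHom.comp_apply, Polynomial.coeToPowerSeries.ringHom_apply, Polynomial.coe_X,
    PowerSeries.map_X]

/-- the truncated Euler products, over `ZMod 7`. -/
noncomputable def Fs (m : ℕ) : PowerSeries (ZMod 7) :=
  ∏ i ∈ range m, (1 - (PowerSeries.X)^(i+1))

lemma Φ_poch (m : ℕ) : Φ (pochZ m) = Fs m := by
  rw [pochZ, Fs, map_prod]
  refine Finset.prod_congr rfl fun i _ => ?_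
  rw [map_sub, map_one, map_pow, Φ_X]

lemma constantCoeff_Fs (m : ℕ) : constantCoeff (Fs m) = 1 := by
  rw [Fs, map_prod]
  rw [Finset.prod_congr rfl (fun i _ => ?_), Finset.prod_const_one]
  rw [map_sub, map_one, map_pow, constantCoeff_X, zero_pow (by omega), sub_zero]

lemma Fs_ne_zero (m : ℕ) : Fs m ≠ 0 := by
  intro h
  have := constantCoeff_Fs m
  rw [h, map_zero] at this
  exact zero_ne_one this

lemma Fs_factor {a b : ℕ} (h : a ≤ b) :
    Fs b = Fs a * ∏ i ∈ Ico a b, (1 - (PowerSeries.X : PowerSeries (ZMod 7))^(i+1)) := by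
  rw [Fs, Fs, Finset.prod_range_mul_prod_Ico _ h]

/-- power series that agree with `1` up to degree `N` -/
def IsOne (N : ℕ) (A : PowerSeries (ZMod 7)) : Prop :=
  ∀ j, j ≤ N → coeff j A = if j = 0 then 1 else 0

lemma isOne_one (N : ℕ) : IsOne N 1 := by
  intro j _
  exact PowerSeries.coeff_one j

lemma isOne_mul {N A B} (hA : IsOne N A) (hB : IsOne N B) : IsOne N (A * B) := by
  intro j hj
  rw [PowerSeries.coeff_mul, Finset.sum_eq_single (0, j)]
  · rw [hA 0 (by omega), hB j hj, if_pos rfl, one_mul]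
  · rintro ⟨x, y⟩ hxy hne
    rw [HasAntidiagonal.mem_antidiagonal] at hxy
    have hx : x ≠ 0 := by
      rintro rfl
      obtain rfl : y = j := by simpa using hxy
      exact hne rfl
    rw [hA x (by omega), if_neg hx, zero_mul]
  · intro h
    exact absurd (HasAntidiagonal.mem_antidiagonal.2 (by simp)) h

lemma isOne_factor {N w : ℕ} (hw : N < w) :
    IsOne N (1 - (PowerSeries.X : PowerSeries (ZMod 7))^w) := by
  intro j hj
  rw [map_sub, PowerSeries.coeff_one, PowerSeries.coeff_X_pow,
    if_neg (show j ≠ w by omega), sub_zero]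

lemma isOne_prod {N : ℕ} {s : Finset ℕ} (h : ∀ i ∈ s, N < i + 1) :
    IsOne N (∏ i ∈ s, (1 - (PowerSeries.X : PowerSeries (ZMod 7))^(i+1))) := by
  classical
  induction s using Finset.induction_on with
  | empty => simpa using isOne_one N
  | @insert a s' hni ih =>
    rw [Finset.prod_insert hni]
    exact isOne_mul (isOne_factor (h a (Finset.mem_insert_self a s')))
      (ih fun i hi => h i (Finset.mem_insert_of_mem hi))

lemma coeff_mul_isOne {N : ℕ} {A B : PowerSeries (ZMod 7)} (hB : IsOne N B) {j : ℕ}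
    (hj : j ≤ N) : coeff j (A * B) = coeff j A := by
  rw [PowerSeries.coeff_mul, Finset.sum_eq_single (j, 0)]
  · rw [hB 0 (by omega), if_pos rfl, mul_one]
  · rintro ⟨x, y⟩ hxy hne
    rw [HasAntidiagonal.mem_antidiagonal] at hxy
    have hy : y ≠ 0 := by
      rintro rfl
      obtain rfl : x = j := by simpa using hxy
      exact hne rfl
    rw [hB y (by omega), if_neg hy, mul_zero]
  · intro h
    exact absurd (HasAntidiagonal.mem_antidiagonal.2 (by simp)) h

lemma coeff_isOne {N : ℕ} {A : PowerSeries (ZMod 7)} (hA : IsOne N A) {j : ℕ} (hj : j ≤ N) :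
    coeff j A = if j = 0 then 1 else 0 := hA j hj

lemma T_ge (d : ℕ) : d ≤ T d := by
  induction d with
  | zero => simp [T]
  | succ k ih => rw [T_succ]; omega

/-- the key coefficient-extraction lemma -/
lemma key_coeff {n N t : ℕ} (hN : N ≤ n) (ht : t ≤ 2*n+1) :
    coeff N (Φ (c n t) * Fs n) = if N = e n t then 1 else 0 := by
  rw [c_of_le ht,
    show Φ (Polynomial.X ^ e n t * gb (2*n+1) (2*n+1-t))
      = PowerSeries.X ^ (e n t) * Φ (gb (2*n+1) (2*n+1-t)) by
        rw [map_mul, map_pow, Φ_X]]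
  -- reorganize to (gbS * Fs n) * X^e
  rw [show PowerSeries.X ^ (e n t) * Φ (gb (2*n+1) (2*n+1-t)) * Fs n
      = (Φ (gb (2*n+1) (2*n+1-t)) * Fs n) * PowerSeries.X ^ (e n t) by ring]
  rw [PowerSeries.coeff_mul_X_pow']
  by_cases he : e n t ≤ N
  · rw [if_pos he]
    -- key product identity
    have hgb := gb_mul_poch (2*n+1) (2*n+1-t) (by omega)
    have hφ : Φ (gb (2*n+1) (2*n+1-t)) * (Fs (2*n+1-t) * Fs t) = Fs (2*n+1) := by
      have := congrArg Φ hgb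
      rw [map_mul, map_mul, Φ_poch, Φ_poch, Φ_poch] at this
      rw [show 2*n+1-(2*n+1-t) = t by omega] at this
      linear_combination this
    set gbS := Φ (gb (2*n+1) (2*n+1-t)) with hgbS
    -- case on t ≤ n or not
    rcases le_or_gt t n with hcase | hcase
    · -- a = t, b = 2n+1-t
      have hb : n + 1 ≤ 2*n+1-t := by omega
      have h1 : Fs n = Fs t * ∏ i ∈ Ico t n, (1 - (PowerSeries.X : PowerSeries (ZMod 7))^(i+1)) :=
        Fs_factor hcase
      have h2 : Fs (2*n+1) = Fs (2*n+1-t) *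
          ∏ i ∈ Ico (2*n+1-t) (2*n+1), (1 - (PowerSeries.X : PowerSeries (ZMod 7))^(i+1)) :=
        Fs_factor (by omega)
      have hcancel : gbS * Fs t
          = ∏ i ∈ Ico (2*n+1-t) (2*n+1), (1 - (PowerSeries.X : PowerSeries (ZMod 7))^(i+1)) := by
        have hne := Fs_ne_zero (2*n+1-t)
        apply mul_right_cancel₀ hne
        rw [h2] at hφ
        calc gbS * Fs t * Fs (2*n+1-t) = gbS * (Fs (2*n+1-t) * Fs t) := by ring
          _ = _ := by rw [hφ]; ring
      have heN : e n t = T (n - t) := by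
        simp only [e]; rw [if_neg (by omega)]
      have hTge := T_ge (n - t)
      have hbound : N - e n t ≤ t := by omega
      rw [h1, show gbS * (Fs t * ∏ i ∈ Ico t n,
            (1 - (PowerSeries.X : PowerSeries (ZMod 7))^(i+1)))
          = (gbS * Fs t) * ∏ i ∈ Ico t n,
            (1 - (PowerSeries.X : PowerSeries (ZMod 7))^(i+1)) by ring, hcancel]
      rw [show (if N = e n t then (1 : ZMod 7) else 0) = if N - e n t = 0 then 1 else 0 by
        by_cases hNe : N = e n t
        · rw [if_pos hNe, if_pos (by omega)]
        · rw [if_neg hNe, if_neg (by omega)]]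
      exact coeff_isOne (isOne_mul
        (isOne_prod fun i hi => by simp only [Finset.mem_Ico] at hi; omega)
        (isOne_prod fun i hi => by simp only [Finset.mem_Ico] at hi; omega)) le_rfl
    · -- a = 2n+1-t, b = t
      have ha : 2*n+1-t ≤ n := by omega
      have h1 : Fs n = Fs (2*n+1-t) * ∏ i ∈ Ico (2*n+1-t) n,
          (1 - (PowerSeries.X : PowerSeries (ZMod 7))^(i+1)) := Fs_factor ha
      have h2 : Fs (2*n+1) = Fs t *
          ∏ i ∈ Ico t (2*n+1), (1 - (PowerSeries.X : PowerSeries (ZMod 7))^(i+1)) :=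
        Fs_factor (by omega)
      have hcancel : gbS * Fs (2*n+1-t)
          = ∏ i ∈ Ico t (2*n+1), (1 - (PowerSeries.X : PowerSeries (ZMod 7))^(i+1)) := by
        have hne := Fs_ne_zero t
        apply mul_right_cancel₀ hne
        rw [h2] at hφ
        calc gbS * Fs (2*n+1-t) * Fs t = gbS * (Fs (2*n+1-t) * Fs t) := by ring
          _ = _ := by rw [hφ]; ring
      have heN : e n t = T (t - (n+1)) := by
        simp only [e]; rw [if_pos (by omega)]
      have hTge := T_ge (t - (n+1))
      have hbound : N - e n t ≤ 2*n+1-t := by omega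
      rw [h1, show gbS * (Fs (2*n+1-t) * ∏ i ∈ Ico (2*n+1-t) n,
            (1 - (PowerSeries.X : PowerSeries (ZMod 7))^(i+1)))
          = (gbS * Fs (2*n+1-t)) * ∏ i ∈ Ico (2*n+1-t) n,
            (1 - (PowerSeries.X : PowerSeries (ZMod 7))^(i+1)) by ring, hcancel]
      rw [show (if N = e n t then (1 : ZMod 7) else 0) = if N - e n t = 0 then 1 else 0 by
        by_cases hNe : N = e n t
        · rw [if_pos hNe, if_pos (by omega)]
        · rw [if_neg hNe, if_neg (by omega)]]
      exact coeff_isOne (isOne_mul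
        (isOne_prod fun i hi => by simp only [Finset.mem_Ico] at hi; omega)
        (isOne_prod fun i hi => by simp only [Finset.mem_Ico] at hi; omega)) le_rfl
  · rw [if_neg he, if_neg (by omega)]


lemma sum_split {M : Type*} [AddCommMonoid M] (a b : ℕ) (f : ℕ → M) :
    ∑ t ∈ range (a+b), f t = (∑ t ∈ range a, f t) + ∑ j ∈ range b, f (a+j) := by
  induction b with
  | zero => simp
  | succ k ih =>
    rw [show a+(k+1) = (a+k)+1 by omega, Finset.sum_range_succ, ih, Finset.sum_range_succ,
      add_assoc]

lemma e_left {n j : ℕ} (hj : j ≤ n) : e n (n - j) = T j := by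
  simp only [e]
  rw [if_neg (by omega)]
  congr 1
  omega

lemma e_right (n j : ℕ) : e n (n+1+j) = T j := by
  simp only [e]
  rw [if_pos (by omega)]
  congr 1
  omega

lemma cube_coeff (n N : ℕ) (hN : N ≤ n) :
    coeff N ((Fs n)^3)
      = ∑ j ∈ range (n+1), (if N = T j then (((-1)^j * (2*j+1) : ℤ) : ZMod 7) else 0) := by
  have h1 : ((-1 : Polynomial ℤ))^(n+1) * (-1 : Polynomial ℤ)^(n+1) = 1 := by
    rw [← pow_add]
    exact Even.neg_one_pow ⟨n+1, by ring⟩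
  have hcube : (pochZ n)^3 = (-1)^(n+1) * (SS n * pochZ n) := by
    rw [SS_eq n]
    linear_combination (-((pochZ n)^2 * pochZ n)) * h1
  have hser := congrArg Φ hcube
  rw [map_pow, Φ_poch, map_mul, map_mul, Φ_poch, map_pow, map_neg, map_one, SS, map_sum] at hser
  have hser2 : (Fs n)^3 = ∑ t ∈ range (2*n+2),
      PowerSeries.C ((-1)^(n+1+t) * (t : ZMod 7)) * (Φ (c n t) * Fs n) := by
    rw [hser, Finset.sum_mul, Finset.mul_sum]
    refine Finset.sum_congr rfl fun t _ => ?_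
    rw [map_mul, map_mul, map_pow, map_neg, map_one,
      show Φ ((t : ℕ) : Polynomial ℤ) = ((t : ℕ) : PowerSeries (ZMod 7)) by
        rw [map_natCast],
      map_mul (PowerSeries.C), map_pow, map_neg, map_one,
      show PowerSeries.C ((t : ℕ) : ZMod 7) = ((t : ℕ) : PowerSeries (ZMod 7)) by
        rw [map_natCast],
      pow_add]
    ring
  rw [hser2, map_sum]
  have hterm : ∀ t ∈ range (2*n+2),
      coeff N (PowerSeries.C ((-1)^(n+1+t) * (t : ZMod 7))
        * (Φ (c n t) * Fs n))
      = (-1)^(n+1+t) * (t : ZMod 7) * (if N = e n t then 1 else 0) := by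
    intro t ht
    rw [Finset.mem_range] at ht
    rw [PowerSeries.coeff_C_mul, key_coeff hN (by omega)]
  rw [Finset.sum_congr rfl hterm, show 2*n+2 = (n+1)+(n+1) by ring, sum_split,
    ← Finset.sum_range_reflect
      (fun t => (-1)^(n+1+t) * (t : ZMod 7) * (if N = e n t then 1 else 0)) (n+1),
    ← Finset.sum_add_distrib]
  refine Finset.sum_congr rfl fun j hj => ?_
  rw [Finset.mem_range] at hj
  have hjn : j ≤ n := by omega
  rw [show n+1-1-j = n-j by omega, e_left hjn, e_right n j]
  by_cases hT : N = T j
  · simp only [if_pos hT, mul_one]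
    rw [show n+1+(n-j) = 2*(n-j)+(j+1) by omega, show n+1+(n+1+j) = 2*(n+1)+j by omega]
    simp only [pow_add, pow_mul, neg_one_sq, one_pow, one_mul, pow_one]
    rw [Nat.cast_sub hjn]
    push_cast
    ring
  · simp only [if_neg hT, mul_zero, add_zero]


lemma eightT (j : ℕ) : 8 * T j + 1 = (2*j+1)^2 := by
  induction j with
  | zero => simp [T]
  | succ k ih =>
    rw [T_succ]
    have h : (2*(k+1)+1)^2 = (2*k+1)^2 + 8*k + 8 := by ring
    omega

lemma zmod7_sq (x y : ZMod 7) (h : x^2 + y^2 = 0) : x = 0 := by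
  revert h
  revert x y
  decide

lemma F6_vanish {n a : ℕ} (ha : a ≤ n) (hmod : a % 7 = 5) :
    coeff a ((Fs n)^6) = 0 := by
  rw [show (6 : ℕ) = 3 + 3 from rfl, pow_add, PowerSeries.coeff_mul]
  refine Finset.sum_eq_zero ?_
  rintro ⟨u, v⟩ huv
  rw [HasAntidiagonal.mem_antidiagonal] at huv
  simp only
  rw [cube_coeff n u (by omega), cube_coeff n v (by omega), Finset.sum_mul_sum]
  refine Finset.sum_eq_zero fun j _ => Finset.sum_eq_zero fun j' _ => ?_
  by_cases h1 : u = T j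
  · by_cases h2 : v = T j'
    · rw [if_pos h1, if_pos h2]
      -- T j + T j' ≡ 5 mod 7 forces 7 ∣ 2j+1
      have hsum : T j + T j' = a := by omega
      have hcast : (((2*j+1 : ℕ) : ZMod 7))^2 + (((2*j'+1 : ℕ) : ZMod 7))^2 = 0 := by
        have e1 := eightT j
        have e2 := eightT j'
        have : ((8 * T j + 1 : ℕ) : ZMod 7) + ((8 * T j' + 1 : ℕ) : ZMod 7)
            = ((8 * a + 2 : ℕ) : ZMod 7) := by
          rw [← Nat.cast_add]
          congr 1
          omega
        rw [e1, e2] at this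
        push_cast at this ⊢
        have ha7 : ((a : ℕ) : ZMod 7) = 5 := by
          rw [← ZMod.natCast_mod a 7, hmod]
          decide
        have h42 : (42 : ZMod 7) = 0 := by decide
        linear_combination this + 8 * ha7 + h42
      have hz := zmod7_sq _ _ hcast
      have : (((-1)^j * (2*↑j+1) : ℤ) : ZMod 7) = 0 := by
        push_cast at hz ⊢
        rw [hz]
        ring
      rw [this, zero_mul]
    · rw [if_neg h2, mul_zero]
  · rw [if_neg h1, zero_mul]

/-- the 7-dilated Euler product -/
noncomputable def Gs (m : ℕ) : PowerSeries (ZMod 7) :=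
  ∏ i ∈ range m, (1 - (PowerSeries.X)^(7*(i+1)))

lemma C_injective : Function.Injective (PowerSeries.C (R := ZMod 7)) := fun a b h => by
  simpa using congrArg (PowerSeries.constantCoeff (R := ZMod 7)) h

instance : CharP (PowerSeries (ZMod 7)) 7 :=
  charP_of_injective_ringHom C_injective 7

lemma Fs_pow7 (m : ℕ) : (Fs m)^7 = Gs m := by
  rw [Fs, Gs, ← Finset.prod_pow]
  refine Finset.prod_congr rfl fun i _ => ?_
  rw [sub_pow_char (p := 7), one_pow, ← pow_mul, mul_comm (i+1) 7]

lemma constantCoeff_Gs (m : ℕ) : constantCoeff (Gs m) = 1 := by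
  rw [Gs, map_prod]
  rw [Finset.prod_congr rfl (fun i _ => ?_), Finset.prod_const_one]
  rw [map_sub, map_one, map_pow, constantCoeff_X, zero_pow (by omega), sub_zero]

/-- supported on multiples of 7 -/
def Supp7 (A : PowerSeries (ZMod 7)) : Prop := ∀ j, ¬ (7 ∣ j) → coeff j A = 0

lemma supp7_mul {A B} (hA : Supp7 A) (hB : Supp7 B) : Supp7 (A * B) := by
  intro j hj
  rw [PowerSeries.coeff_mul]
  refine Finset.sum_eq_zero ?_
  rintro ⟨x, y⟩ hxy
  rw [HasAntidiagonal.mem_antidiagonal] at hxy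
  by_cases hx : 7 ∣ x
  · have hy : ¬ 7 ∣ y := by
      intro hy
      exact hj (by omega)
    rw [hB y hy, mul_zero]
  · rw [hA x hx, zero_mul]

lemma supp7_Gs (m : ℕ) : Supp7 (Gs m) := by
  induction m with
  | zero =>
    intro j hj
    rw [Gs, Finset.range_zero, Finset.prod_empty, PowerSeries.coeff_one,
      if_neg (fun h => hj (by omega))]
  | succ k ih =>
    rw [Gs, Finset.prod_range_succ, ← Gs]
    refine supp7_mul ih ?_
    intro j hj
    rw [map_sub, PowerSeries.coeff_one, PowerSeries.coeff_X_pow,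
      if_neg (fun h => hj (by omega)), if_neg (fun h => hj (by rw [h]; omega)), sub_zero]

lemma supp7_inv {A : PowerSeries (ZMod 7)} (hA : Supp7 A)
    (h0 : constantCoeff A ≠ 0) : Supp7 A⁻¹ := by
  intro j
  induction j using Nat.strong_induction_on with
  | _ j ih =>
    intro hj
    have hmul : A * A⁻¹ = 1 := PowerSeries.mul_inv_cancel A h0
    have hco := congrArg (PowerSeries.coeff j) hmul
    rw [PowerSeries.coeff_mul, PowerSeries.coeff_one, if_neg (fun h => hj (by omega))] at hco
    rw [Finset.sum_eq_single (0, j)] at hco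
    · have ha0 : coeff 0 A = constantCoeff A := by
        rw [PowerSeries.coeff_zero_eq_constantCoeff]
      rw [ha0] at hco
      exact (mul_eq_zero.1 hco).resolve_left h0
    · rintro ⟨x, y⟩ hxy hne
      rw [HasAntidiagonal.mem_antidiagonal] at hxy
      by_cases hx : 7 ∣ x
      · have hxne : x ≠ 0 := by
          rintro rfl
          obtain rfl : y = j := by simpa using hxy
          exact hne rfl
        have hy : ¬ 7 ∣ y := fun h => hj (by omega)
        rw [ih y (by omega) hy, mul_zero]
      · rw [hA x hx, zero_mul]
    · intro h
      exact absurd (HasAntidiagonal.mem_antidiagonal.2 (by simp)) h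

/-- partial partition generating series -/
noncomputable def Ps (m : ℕ) : PowerSeries (ZMod 7) :=
  ∏ i ∈ range m, (1 - (PowerSeries.X)^(i+1))⁻¹

lemma Ps_mul_Fs (m : ℕ) : Ps m * Fs m = 1 := by
  rw [Ps, Fs, ← Finset.prod_mul_distrib]
  rw [Finset.prod_congr rfl (fun i _ => ?_), Finset.prod_const_one]
  refine PowerSeries.inv_mul_cancel _ ?_
  rw [map_sub, map_one, map_pow, constantCoeff_X, zero_pow (by omega), sub_zero]
  exact one_ne_zero

lemma Ps_eq (m : ℕ) : Ps m = (Fs m)^6 * (Gs m)⁻¹ := by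
  have hG : constantCoeff (Gs m) ≠ 0 := by
    rw [constantCoeff_Gs]; exact one_ne_zero
  apply mul_right_cancel₀ (Fs_ne_zero m)
  rw [Ps_mul_Fs]
  symm
  calc (Fs m)^6 * (Gs m)⁻¹ * Fs m = (Fs m)^7 * (Gs m)⁻¹ := by ring
    _ = Gs m * (Gs m)⁻¹ := by rw [Fs_pow7]
    _ = 1 := PowerSeries.mul_inv_cancel _ hG

lemma coeff_Ps_vanish {N : ℕ} (hmod : N % 7 = 5) : coeff N (Ps (N+1)) = 0 := by
  rw [Ps_eq, PowerSeries.coeff_mul]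
  refine Finset.sum_eq_zero ?_
  rintro ⟨u, v⟩ huv
  rw [HasAntidiagonal.mem_antidiagonal] at huv
  by_cases hv : 7 ∣ v
  · have hu : u % 7 = 5 := by omega
    rw [F6_vanish (by omega) hu, zero_mul]
  · rw [supp7_inv (supp7_Gs (N+1)) (by rw [constantCoeff_Gs]; exact one_ne_zero) v hv,
      mul_zero]

open scoped Classical

/-- A convenience constructor for the power series whose coefficients indicate a subset. -/
noncomputable def indicatorSeries (α : Type*) [Semiring α] (s : Set ℕ) : PowerSeries α :=
  PowerSeries.mk fun n => if n ∈ s then 1 else 0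

theorem coeff_indicator (s : Set ℕ) {α : Type*} [Semiring α] (n : ℕ) :
    PowerSeries.coeff n (indicatorSeries α s) = if n ∈ s then 1 else 0 :=
  PowerSeries.coeff_mk _ _

theorem constantCoeff_indicator (s : Set ℕ) {α : Type*} [Semiring α] :
    PowerSeries.constantCoeff (indicatorSeries α s) = if 0 ∈ s then 1 else 0 :=
  rfl

theorem num_series' {α : Type*} [Field α] (i : ℕ) :
    (1 - (PowerSeries.X : PowerSeries α) ^ (i + 1))⁻¹ = indicatorSeries α {k | i + 1 ∣ k} := by
  rw [PowerSeries.inv_eq_iff_mul_eq_one]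
  · ext n
    cases n with
    | zero => simp [mul_sub, zero_pow, constantCoeff_indicator]
    | succ n =>
      simp only [PowerSeries.coeff_one, if_false, mul_sub, mul_one, coeff_indicator,
        LinearMap.map_sub, reduceCtorEq]
      simp_rw [PowerSeries.coeff_mul, PowerSeries.coeff_X_pow, coeff_indicator,
        @boole_mul _ _ _ _]
      erw [@Finset.sum_ite _ _ _ _ _ (fun _ => Classical.propDecidable _), Finset.sum_ite]
      simp_rw [@Finset.filter_filter _ _ _ _ _, Finset.sum_const_zero, add_zero,
        Finset.sum_const, nsmul_eq_mul, mul_one, sub_eq_iff_eq_add, zero_add]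
      symm
      split_ifs with h
      · suffices #{a ∈ antidiagonal (n + 1) | i + 1 ∣ a.fst ∧ a.snd = i + 1} = 1 by
          simp only [Set.mem_setOf_eq]; convert congr_arg ((↑) : ℕ → α) this; norm_cast
        rw [Finset.card_eq_one]
        cases' h with p hp
        refine ⟨((i + 1) * (p - 1), i + 1), ?_⟩
        ext ⟨a₁, a₂⟩
        simp only [Finset.mem_filter, Prod.mk_inj, HasAntidiagonal.mem_antidiagonal,
          Finset.mem_singleton]
        constructor
        · rintro ⟨a_left, ⟨a, rfl⟩, rfl⟩
          refine ⟨?_, rfl⟩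
          rw [Nat.mul_sub_left_distrib, ← hp, ← a_left, mul_one, Nat.add_sub_cancel]
        · rintro ⟨rfl, rfl⟩
          match p with
          | 0 => rw [mul_zero] at hp; cases hp
          | p + 1 => rw [hp]; simp [mul_add]
      · suffices #{a ∈ antidiagonal (n + 1) | i + 1 ∣ a.fst ∧ a.snd = i + 1} = 0 by
          simp only [Set.mem_setOf_eq]; convert congr_arg ((↑) : ℕ → α) this; norm_cast
        rw [Finset.card_eq_zero]
        apply Finset.eq_empty_of_forall_notMem
        simp only [Prod.forall, Finset.mem_filter, not_and, HasAntidiagonal.mem_antidiagonal]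
        rintro _ h₁ h₂ ⟨a, rfl⟩ rfl
        apply h
        simp [← h₂]
  · simp [zero_pow]

-- The main workhorse of the partition theorem proof (from Mathlib's Archive).
theorem partialGF_prop (α : Type*) [CommSemiring α] (n : ℕ) (s : Finset ℕ)
    (hs : ∀ i ∈ s, 0 < i) (c : ℕ → Set ℕ) (hc : ∀ i, i ∉ s → 0 ∈ c i) :
    #{p : n.Partition | (∀ j, p.parts.count j ∈ c j) ∧ ∀ j ∈ p.parts, j ∈ s} =
      coeff n (∏ i ∈ s, indicatorSeries α ((· * i) '' c i)) := by
  simp_rw [PowerSeries.coeff_prod, coeff_indicator, Finset.prod_boole, Finset.sum_boole]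
  apply congr_arg
  simp only [Finset.mem_univ, forall_true_left, not_and, not_forall, exists_prop,
    Set.mem_image, not_exists]
  set φ : (a : Nat.Partition n) →
    a ∈ Finset.filter (fun p ↦ (∀ (j : ℕ), Multiset.count j p.parts ∈ c j) ∧
      ∀ j ∈ p.parts, j ∈ s) Finset.univ →
    ℕ →₀ ℕ := fun p _ => {
      toFun := fun i => Multiset.count i p.parts • i
      support := Finset.filter (fun i => i ≠ 0) p.parts.toFinset
      mem_support_toFun := fun a => by
        simp only [smul_eq_mul, ne_eq, mul_eq_zero, Multiset.count_eq_zero]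
        rw [not_or, not_not]
        simp only [Multiset.mem_toFinset, not_not, Finset.mem_filter] }
  refine Finset.card_bij φ ?_ ?_ ?_
  · intro a ha
    simp only [φ, not_forall, not_exists, not_and, exists_prop, Finset.mem_filter]
    rw [Finset.mem_finsuppAntidiag]
    dsimp only [ne_eq, smul_eq_mul, id_eq, eq_mpr_eq_cast, le_eq_subset, Finsupp.coe_mk]
    simp only [Finset.mem_univ, forall_true_left, not_and, not_forall, exists_prop,
      Finset.mem_filter, true_and] at ha
    refine ⟨⟨?_, fun i ↦ ?_⟩, fun i _ ↦ ⟨a.parts.count i, ha.1 i, rfl⟩⟩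
    · conv_rhs => simp [← a.parts_sum]
      rw [Finset.sum_multiset_count_of_subset _ s]
      · simp only [smul_eq_mul]
      · intro i
        simp only [Multiset.mem_toFinset, not_not, Finset.mem_filter]
        apply ha.2
    · simp only [ne_eq, Multiset.mem_toFinset, not_not, Finset.mem_filter, and_imp]
      exact fun hi _ ↦ ha.2 i hi
  · intro p₁ hp₁ p₂ hp₂ h
    apply Nat.Partition.ext
    simp only [true_and, Finset.mem_univ, Finset.mem_filter] at hp₁ hp₂
    ext i
    simp only [φ, ne_eq, Multiset.mem_toFinset, not_not, smul_eq_mul, Finsupp.mk.injEq] at h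
    by_cases hi : i = 0
    · rw [hi]
      rw [Multiset.count_eq_zero_of_notMem]
      · rw [Multiset.count_eq_zero_of_notMem]
        intro a; exact Nat.lt_irrefl 0 (hs 0 (hp₂.2 0 a))
      intro a; exact Nat.lt_irrefl 0 (hs 0 (hp₁.2 0 a))
    · rw [← mul_left_inj' hi]
      rw [funext_iff] at h
      exact h.2 i
  · simp only [φ, Finset.mem_filter, Finset.mem_finsuppAntidiag, Finset.mem_univ, exists_prop,
      true_and, and_assoc]
    rintro f ⟨hf, hf₃, hf₄⟩
    have hf' : f ∈ Finset.finsuppAntidiag s n := Finset.mem_finsuppAntidiag.mpr ⟨hf, hf₃⟩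
    simp only [Finset.mem_finsuppAntidiag] at hf'
    refine ⟨⟨∑ i ∈ s, Multiset.replicate (f i / i) i, ?_, ?_⟩, ?_, ?_, ?_⟩
    · intro i hi
      simp only [exists_prop, Multiset.mem_sum, Multiset.mem_map] at hi
      rcases hi with ⟨t, ht, z⟩
      apply hs
      rwa [Multiset.eq_of_mem_replicate z]
    · simp_rw [Multiset.sum_sum, Multiset.sum_replicate, Nat.nsmul_eq_mul]
      rw [← hf'.1]
      refine Finset.sum_congr rfl fun i hi => Nat.div_mul_cancel ?_
      rcases hf₄ i hi with ⟨w, _, hw₂⟩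
      rw [← hw₂]
      exact dvd_mul_left _ _
    · intro i
      simp_rw [Multiset.count_sum', Multiset.count_replicate, Finset.sum_ite_eq']
      split_ifs with h
      · rcases hf₄ i h with ⟨w, hw₁, hw₂⟩
        rwa [← hw₂, Nat.mul_div_cancel _ (hs i h)]
      · exact hc _ h
    · intro i hi
      rw [Multiset.mem_sum] at hi
      rcases hi with ⟨j, hj₁, hj₂⟩
      rwa [Multiset.eq_of_mem_replicate hj₂]
    · ext i
      simp_rw [Multiset.count_sum', Multiset.count_replicate, Finset.sum_ite_eq']
      simp only [ne_eq, Multiset.mem_toFinset, not_not, smul_eq_mul, ite_mul,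
        zero_mul, Finsupp.coe_mk]
      split_ifs with h
      · apply Nat.div_mul_cancel
        rcases hf₄ i h with ⟨w, _, hw₂⟩
        apply Dvd.intro_left _ hw₂
      · apply symm
        rw [← Finsupp.notMem_support_iff]
        exact notMem_mono hf'.2 h

theorem card_partition_eq_coeff {N m : ℕ} (h : N ≤ m) :
    ((Fintype.card (Nat.Partition N) : ZMod 7)) = coeff N (Ps m) := by
  have hprop := partialGF_prop (ZMod 7) N
    ((range m).map ⟨Nat.succ, Nat.succ_injective⟩)
    (by intro i hi; simp only [Finset.mem_map, Function.Embedding.coeFn_mk] at hi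
        obtain ⟨a, -, rfl⟩ := hi; exact Nat.succ_pos a)
    (fun _ => Set.univ) (fun _ _ => trivial)
  have hps : Ps m = ∏ i ∈ (range m).map ⟨Nat.succ, Nat.succ_injective⟩,
      indicatorSeries (ZMod 7) ((· * i) '' Set.univ) := by
    rw [Ps, Finset.prod_map]
    refine Finset.prod_congr rfl fun i _ => ?_
    simp only [Function.Embedding.coeFn_mk]
    rw [show Nat.succ i = i + 1 from rfl, num_series']
    ext k
    have hiff : (i + 1 ∣ k) ↔ ∃ x, x * (i + 1) = k :=
      ⟨fun ⟨c, hc⟩ => ⟨c, by rw [hc]; ring⟩, fun ⟨x, hx⟩ => Dvd.intro_left x hx⟩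
    simp [coeff_indicator, hiff]
  rw [hps, ← hprop]
  norm_cast
  rw [Finset.filter_true_of_mem, Finset.card_univ]
  intro p _
  refine ⟨fun j => trivial, fun j hj => ?_⟩
  have hj1 : 0 < j := p.parts_pos hj
  have hjN : j ≤ N := by
    have := Multiset.single_le_sum (fun _ _ => Nat.zero_le _) _ hj
    rwa [p.parts_sum] at this
  simp only [Finset.mem_map, Finset.mem_range, Function.Embedding.coeFn_mk]
  exact ⟨j - 1, by omega, by omega⟩

end Ram7


/-- Ramanujan's congruence modulo 7: for every `k ≥ 0`, `p(7k+5) ≡ 0 (mod 7)`. -/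
theorem partition_seven_congruence (k : ℕ) :
    7 ∣ Fintype.card (Nat.Partition (7 * k + 5)) := by
  have h5 : (7*k+5) % 7 = 5 := by omega
  have hc := Ram7.card_partition_eq_coeff (N := 7*k+5) (m := 7*k+5+1) (by omega)
  rw [Ram7.coeff_Ps_vanish h5] at hc
  exact (ZMod.natCast_eq_zero_iff _ 7).1 hc
end

section
/- The coefficients c_n defined by the product ∏_{n=1}^{6}(1 + ω^n t - ω^{2n} t^2 a - ω^{5n} t^5 a^3) = ∑_{k=0}^{30} c_k t^k (with ω = e^{2πi/7}) satisfy the recurrence c_n + c_{n-1} - a c_{n-2} - a^3 c_{n-5} = d_{n/7} if 7 | n and = 0 otherwise, where ∑_{k=0}^5 d_k s^k = ∏_{n=0}^{6}(1 + ω^n t - ω^{2n}t^2 a - ω^{5n}t^5 a^3) with s = t^7. -/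
open Polynomial Finset

/-- A primitive 7th root of unity `ω = e^{2πi/7}`. -/
noncomputable def ω7 : ℂ := Complex.exp (2 * Real.pi * Complex.I / 7)

/-- The factor `1 + ωⁿ t - ω^{2n} t² a - ω^{5n} t⁵ a³` as a polynomial in `t` with
coefficients in `ℂ[a]`. -/
noncomputable def ramFactor (n : ℕ) : Polynomial (Polynomial ℂ) :=
  1 + Polynomial.C (Polynomial.C (ω7 ^ n)) * Polynomial.X
    - Polynomial.C (Polynomial.C (ω7 ^ (2 * n)) * Polynomial.X) * Polynomial.X ^ 2
    - Polynomial.C (Polynomial.C (ω7 ^ (5 * n)) * Polynomial.X ^ 3) * Polynomial.X ^ 5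

/-- The coefficients `c_k` (extended by `0` for negative index) of the numerator product
`∏_{n=1}^{6} (1 + ωⁿ t - ω^{2n} t² a - ω^{5n} t⁵ a³) = ∑_{k=0}^{30} c_k t^k`. -/
noncomputable def ramC (n : ℤ) : Polynomial ℂ :=
  if n < 0 then 0 else (∏ j ∈ Finset.Icc 1 6, ramFactor j).coeff n.toNat

/-- The coefficients `d_k` of the full product
`∏_{n=0}^{6} (1 + ωⁿ t - ω^{2n} t² a - ω^{5n} t⁵ a³) = ∑_{k=0}^{5} d_k t^{7k}`. -/
noncomputable def ramD (k : ℕ) : Polynomial ℂ :=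
  (∏ j ∈ Finset.range 7, ramFactor j).coeff (7 * k)

lemma ω7_prim : IsPrimitiveRoot ω7 7 := Complex.isPrimitiveRoot_exp 7 (by norm_num)

lemma ω7_pow7 : ω7 ^ 7 = 1 := ω7_prim.pow_eq_one

lemma coeff_comp_C_mul_X {R : Type*} [CommSemiring R] (p : R[X]) (c : R) (n : ℕ) :
    (p.comp (C c * X)).coeff n = c ^ n * p.coeff n := by
  induction p using Polynomial.induction_on' with
  | add p q hp hq => simp [add_comp, hp, hq, mul_add]
  | monomial i a =>
      rw [← C_mul_X_pow_eq_monomial]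
      simp only [mul_comp, pow_comp, C_comp, X_comp]
      have h : C a * (C c * X) ^ i = C (a * c ^ i) * X ^ i := by
        rw [mul_pow, ← C_pow, C_mul]; ring
      rw [h, coeff_C_mul, coeff_C_mul, coeff_X_pow]
      split_ifs with hin
      · subst hin; ring
      · ring

lemma ramFactor_comp (n : ℕ) :
    (ramFactor n).comp (C (C ω7) * X) = ramFactor (n + 1) := by
  simp only [ramFactor, add_comp, sub_comp, mul_comp, one_comp, C_comp, X_comp, pow_comp,
    mul_pow, ← C_pow, ← C_mul]
  rw [show 2*(n+1) = 2*n+2 by ring, show 5*(n+1) = 5*n+5 by ring, pow_succ, pow_add, pow_add]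
  simp only [map_mul, map_pow]
  ring

lemma ramFactor_seven : ramFactor 7 = ramFactor 0 := by
  have h14 : ω7 ^ (2 * 7) = 1 := by rw [show 2*7 = 7*2 by ring, pow_mul, ω7_pow7, one_pow]
  have h35 : ω7 ^ (5 * 7) = 1 := by rw [show 5*7 = 7*5 by ring, pow_mul, ω7_pow7, one_pow]
  simp [ramFactor, ω7_pow7, h14, h35]

lemma prod_comp_eq : (∏ j ∈ range 7, ramFactor j).comp (C (C ω7) * X)
    = ∏ j ∈ range 7, ramFactor j := by
  rw [Polynomial.prod_comp]
  simp only [ramFactor_comp]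
  rw [Finset.prod_range_succ, Finset.prod_range_succ' ramFactor 6, ramFactor_seven]

lemma coeff_prod_eq_zero {n : ℕ} (h : ¬ 7 ∣ n) :
    (∏ j ∈ range 7, ramFactor j).coeff n = 0 := by
  have h1 := coeff_comp_C_mul_X (∏ j ∈ range 7, ramFactor j) (C ω7) n
  rw [prod_comp_eq] at h1
  have h2 : ((C ω7 : Polynomial ℂ) ^ n - 1) * (∏ j ∈ range 7, ramFactor j).coeff n = 0 := by
    rw [sub_mul, one_mul, ← h1]
    ring
  rcases mul_eq_zero.mp h2 with h3 | h3
  · exfalso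
    apply h
    rw [← ω7_prim.pow_eq_one_iff_dvd]
    have h4 := sub_eq_zero.mp h3
    rw [← C_pow, show (1 : Polynomial ℂ) = C 1 from (map_one C).symm] at h4
    exact C_injective h4
  · exact h3

lemma ramC_eq (n k : ℕ) : ramC ((n : ℤ) - k) =
    if k ≤ n then (∏ j ∈ Finset.Icc 1 6, ramFactor j).coeff (n - k) else 0 := by
  unfold ramC
  split_ifs with h1 h2 h2
  · omega
  · rfl
  · congr 1; omega
  · omega

lemma prod_expand : (∏ j ∈ range 7, ramFactor j) =
    (∏ j ∈ Finset.Icc 1 6, ramFactor j) + (∏ j ∈ Finset.Icc 1 6, ramFactor j) * X ^ 1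
      - C X * ((∏ j ∈ Finset.Icc 1 6, ramFactor j) * X ^ 2)
      - C (X ^ 3) * ((∏ j ∈ Finset.Icc 1 6, ramFactor j) * X ^ 5) := by
  have hsplit : (∏ j ∈ range 7, ramFactor j)
      = (∏ j ∈ Finset.Icc 1 6, ramFactor j) * ramFactor 0 := by
    rw [Finset.prod_range_succ',
      show Finset.Icc 1 6 = Finset.Ico 1 7 from (Finset.Ico_add_one_right_eq_Icc 1 6).symm,
      Finset.prod_Ico_eq_prod_range]
    simp [add_comm]
  rw [hsplit, ramFactor]
  simp only [mul_zero, pow_zero, one_mul, map_one]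
  ring

/-- The coefficients `c_n` satisfy the recurrence
`c_n + c_{n-1} - a c_{n-2} - a³ c_{n-5} = d_{n/7}` when `7 ∣ n`, and `= 0` otherwise. -/
theorem ramC_recurrence (n : ℕ) :
    ramC (n : ℤ) + ramC ((n : ℤ) - 1) - Polynomial.X * ramC ((n : ℤ) - 2)
        - Polynomial.X ^ 3 * ramC ((n : ℤ) - 5) =
      if 7 ∣ n then ramD (n / 7) else 0 := by
  have e0 : ramC (n : ℤ) = ramC ((n : ℤ) - (0 : ℕ)) := by norm_num
  have e1 : ramC ((n : ℤ) - 1) = ramC ((n : ℤ) - (1 : ℕ)) := by norm_num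
  have e2 : ramC ((n : ℤ) - 2) = ramC ((n : ℤ) - (2 : ℕ)) := by norm_num
  have e5 : ramC ((n : ℤ) - 5) = ramC ((n : ℤ) - (5 : ℕ)) := by norm_num
  rw [e0, e1, e2, e5, ramC_eq, ramC_eq, ramC_eq, ramC_eq]
  have hc : (∏ j ∈ range 7, ramFactor j).coeff n =
      (∏ j ∈ Finset.Icc 1 6, ramFactor j).coeff n
        + (if 1 ≤ n then (∏ j ∈ Finset.Icc 1 6, ramFactor j).coeff (n - 1) else 0)
        - X * (if 2 ≤ n then (∏ j ∈ Finset.Icc 1 6, ramFactor j).coeff (n - 2) else 0)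
        - X ^ 3 * (if 5 ≤ n then (∏ j ∈ Finset.Icc 1 6, ramFactor j).coeff (n - 5) else 0) := by
    rw [prod_expand]
    simp only [coeff_add, coeff_sub, coeff_C_mul, coeff_mul_X_pow']
  rw [if_pos (Nat.zero_le n), Nat.sub_zero, ← hc]
  split_ifs with h
  · rw [ramD, Nat.mul_div_cancel' h]
  · exact coeff_prod_eq_zero h
end

section
/- For any N ≥ 1 and any residue a with 0 ≤ a < N, p(kN + a) equals the determinant of the (k+1)×(k+1) matrix with (i,j) entry D_{i-j} for j ≤ i < k (0 for j > i, j < k) and last column (Z_0^{(a)}, …, Z_k^{(a)})^T, where D_m and Z_m^{(a)} are defined by ∏_{j=1}^{N-1}(ω^j q)_∞ · (q)_∞ = ∑_m D_m q^{mN} and ∏_{j=1}^{N-1}(ω^j q)_∞ = ∑_{p=0}^{N-1} ∑_m Z_m^{(p)} q^{mN+p}, with ω = e^{2πi/N}. In particular Z_0^{(a)} = p(a) and D_0 = 1. -/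
open PowerSeries Finset

/-- `(x q)_∞ = ∏_{k≥1} (1 - x q^k)` as a formal power series in `q` over `ℂ`:
its `m`-th coefficient is that of the partial product `∏_{k=1}^{m+1} (1 - x q^k)`,
which stabilizes since the omitted factors only affect degrees `> m`. -/
noncomputable def xqProd (x : ℂ) : PowerSeries ℂ :=
  PowerSeries.mk fun m =>
    PowerSeries.coeff (R := ℂ) m
      (∏ k ∈ Finset.range (m + 1),
        (1 - PowerSeries.C (R := ℂ) x * (PowerSeries.X : PowerSeries ℂ) ^ (k + 1)))

namespace PGD


/-- agreement of coefficients up to degree n -/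
def EqUpTo (n : ℕ) (f g : PowerSeries ℂ) : Prop := ∀ i ≤ n, coeff (R := ℂ) i f = coeff (R := ℂ) i g

theorem EqUpTo.mul {n : ℕ} {f g f' g' : PowerSeries ℂ} (h : EqUpTo n f g)
    (h' : EqUpTo n f' g') : EqUpTo n (f * f') (g * g') := by
  intro i hi
  rw [coeff_mul, coeff_mul]
  refine Finset.sum_congr rfl fun ⟨a, b⟩ hab => ?_
  rw [Finset.HasAntidiagonal.mem_antidiagonal] at hab
  rw [h a (le_trans (by omega) hi), h' b (le_trans (by omega) hi)]

theorem EqUpTo.prod {n : ℕ} {ι : Type*} (s : Finset ι) (f g : ι → PowerSeries ℂ)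
    (h : ∀ j ∈ s, EqUpTo n (f j) (g j)) : EqUpTo n (∏ j ∈ s, f j) (∏ j ∈ s, g j) := by
  classical
  induction s using Finset.cons_induction with
  | empty => exact fun i _ => rfl
  | cons a s ha ih =>
    rw [Finset.prod_cons, Finset.prod_cons]
    exact (h a (Finset.mem_cons_self a s)).mul (ih fun j hj => h j (Finset.mem_cons_of_mem hj))

theorem coeff_mul_one_sub_high {f : PowerSeries ℂ} {x : ℂ} {i j : ℕ} (h : i < j) :
    coeff (R := ℂ) i (f * (1 - C (R := ℂ) x * X ^ j)) = coeff (R := ℂ) i f := by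
  rw [mul_sub, mul_one, map_sub, show f * (C (R := ℂ) x * X ^ j) = C (R := ℂ) x * f * X ^ j by ring,
    PowerSeries.coeff_mul_X_pow', if_neg (by omega), sub_zero]

theorem coeff_partial_stable (x : ℂ) {i m m' : ℕ} (h : i < m) (h' : m ≤ m') :
    coeff (R := ℂ) i (∏ k ∈ Finset.range m', (1 - C (R := ℂ) x * X ^ (k + 1))) =
    coeff (R := ℂ) i (∏ k ∈ Finset.range m, (1 - C (R := ℂ) x * X ^ (k + 1))) := by
  induction m' with
  | zero => omega
  | succ m' ih =>
    rcases Nat.eq_or_lt_of_le h' with rfl | hlt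
    · rfl
    · rw [Finset.prod_range_succ, coeff_mul_one_sub_high (by omega), ih (by omega)]

theorem xqProd_eqUpTo (x : ℂ) (n : ℕ) :
    EqUpTo n (xqProd x) (∏ k ∈ Finset.range (n + 1), (1 - C (R := ℂ) x * X ^ (k + 1))) := by
  intro i hi
  rw [xqProd, coeff_mk, ← coeff_partial_stable x (Nat.lt_succ_self i) (show i+1 ≤ n+1 by omega)]



theorem poly_prod_eq {N : ℕ} (hN : 0 < N) {ω : ℂ} (hω : IsPrimitiveRoot ω N) :
    ∏ j ∈ Finset.range N, ((Polynomial.X : Polynomial ℂ) - Polynomial.C (ω ^ j)) =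
      Polynomial.X ^ N - 1 := by
  rw [Polynomial.X_pow_sub_one_eq_prod hN hω]
  rw [show Polynomial.nthRootsFinset N (1 : ℂ) = (Finset.range N).image (ω ^ ·) from ?_]
  · rw [Finset.prod_image]
    intro a ha b hb h
    exact hω.pow_inj (Finset.mem_range.1 ha) (Finset.mem_range.1 hb) h
  · symm
    apply Finset.eq_of_subset_of_card_le
    · intro z hz
      simp only [Finset.mem_image, Finset.mem_range] at hz
      obtain ⟨j, _, rfl⟩ := hz
      rw [Polynomial.mem_nthRootsFinset hN]
      rw [← pow_mul, mul_comm, pow_mul, hω.pow_eq_one, one_pow]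
    · rw [hω.card_nthRootsFinset, Finset.card_image_of_injOn
        (fun a ha b hb h => hω.pow_inj (Finset.mem_range.1 ha) (Finset.mem_range.1 hb) h),
        Finset.card_range]

theorem poly_one_sub_prod {N : ℕ} (hN : 0 < N) {ω : ℂ} (hω : IsPrimitiveRoot ω N) :
    ∏ j ∈ Finset.range N, (1 - Polynomial.C (ω ^ j) * (Polynomial.X : Polynomial ℂ)) =
      1 - Polynomial.X ^ N := by
  apply Polynomial.funext
  intro z
  simp only [Polynomial.eval_prod, Polynomial.eval_sub, Polynomial.eval_one,
    Polynomial.eval_mul, Polynomial.eval_C, Polynomial.eval_X, Polynomial.eval_pow]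
  rcases eq_or_ne z 0 with rfl | hz
  · simp [zero_pow hN.ne']
  · have key := congrArg (Polynomial.eval z⁻¹) (poly_prod_eq hN hω)
    simp only [Polynomial.eval_prod, Polynomial.eval_sub, Polynomial.eval_X,
      Polynomial.eval_C, Polynomial.eval_pow, Polynomial.eval_one] at key
    have : ∏ j ∈ Finset.range N, (1 - ω ^ j * z) =
        z ^ N * ∏ j ∈ Finset.range N, (z⁻¹ - ω ^ j) := by
      rw [show (z : ℂ) ^ N = ∏ _j ∈ Finset.range N, z by
        rw [Finset.prod_const, Finset.card_range], ← Finset.prod_mul_distrib]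
      exact Finset.prod_congr rfl fun j _ => by field_simp
    rw [this, key]
    rw [mul_sub, ← mul_pow, mul_inv_cancel₀ hz, one_pow, mul_one]
theorem ps_one_sub_prod {N : ℕ} (hN : 0 < N) {ω : ℂ} (hω : IsPrimitiveRoot ω N) (m : ℕ) :
    ∏ j ∈ Finset.range N, (1 - C (R := ℂ) (ω ^ j) * (X : PowerSeries ℂ) ^ m) =
      1 - (X : PowerSeries ℂ) ^ (m * N) := by
  have := congrArg (Polynomial.aeval ((X : PowerSeries ℂ) ^ m)) (poly_one_sub_prod hN hω)
  simpa [Polynomial.aeval_def, Polynomial.eval₂_finset_prod, Polynomial.eval₂_pow, Polynomial.eval₂_C, ← pow_mul,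
    PowerSeries.algebraMap_apply, mul_comm] using this

/-- power series supported on multiples of N -/
def SuppN (N : ℕ) (f : PowerSeries ℂ) : Prop := ∀ i, ¬ N ∣ i → coeff (R := ℂ) i f = 0

theorem SuppN.mul {N : ℕ} {f g : PowerSeries ℂ} (hf : SuppN N f) (hg : SuppN N g) :
    SuppN N (f * g) := by
  intro i hi
  rw [coeff_mul]
  refine Finset.sum_eq_zero fun ⟨a, b⟩ hab => ?_
  rw [Finset.HasAntidiagonal.mem_antidiagonal] at hab
  by_cases ha : N ∣ a
  · have hb : ¬ N ∣ b := fun hb => hi (hab ▸ Nat.dvd_add ha hb)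
    rw [hg b hb, mul_zero]
  · rw [hf a ha, zero_mul]

theorem SuppN.one (N : ℕ) : SuppN N 1 := by
  intro i hi
  rw [coeff_one, if_neg]
  rintro rfl
  exact hi (dvd_zero N)

theorem SuppN.one_sub_X_pow (N m : ℕ) : SuppN N (1 - (X : PowerSeries ℂ) ^ (m * N)) := by
  intro i hi
  rw [map_sub, coeff_one, coeff_X_pow, if_neg, if_neg, sub_zero]
  · rintro rfl; exact hi ⟨m, mul_comm m N⟩
  · rintro rfl; exact hi (dvd_zero N)

theorem SuppN.prod {N : ℕ} {ι : Type*} (s : Finset ι) (f : ι → PowerSeries ℂ)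
    (h : ∀ j ∈ s, SuppN N (f j)) : SuppN N (∏ j ∈ s, f j) :=
  Finset.prod_induction f (SuppN N) (fun _ _ => SuppN.mul) (SuppN.one N) h


open scoped Classical

/-- A convenience constructor for the power series whose coefficients indicate a subset. -/
noncomputable def indicatorSeries (α : Type*) [Semiring α] (s : Set ℕ) : PowerSeries α :=
  PowerSeries.mk fun n => if n ∈ s then 1 else 0

theorem coeff_indicator {α : Type*} (s : Set ℕ) [Semiring α] (n : ℕ) :
    coeff (R := α) n (indicatorSeries _ s) = if n ∈ s then 1 else 0 :=
  coeff_mk _ _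

theorem constantCoeff_indicator {α : Type*} (s : Set ℕ) [Semiring α] :
    constantCoeff (R := α) (indicatorSeries _ s) = if 0 ∈ s then 1 else 0 :=
  rfl

theorem num_series' {α : Type*} [Field α] (i : ℕ) :
    (1 - (X : PowerSeries α) ^ (i + 1))⁻¹ = indicatorSeries α {k | i + 1 ∣ k} := by
  rw [PowerSeries.inv_eq_iff_mul_eq_one]
  · ext n
    cases n with
    | zero => simp [mul_sub, zero_pow, constantCoeff_indicator]
    | succ n =>
      simp only [coeff_one, if_false, mul_sub, mul_one, coeff_indicator,
        LinearMap.map_sub, reduceCtorEq]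
      simp_rw [coeff_mul, coeff_X_pow, coeff_indicator, @boole_mul _ _ _ _]
      letI : DecidablePred (fun x : ℕ × ℕ => x.1 ∈ {k | i + 1 ∣ k}) := fun _ => Classical.propDecidable _
      erw [sum_ite, sum_ite]
      simp_rw [@filter_filter _ _ _ _ _, sum_const_zero, add_zero, sum_const, nsmul_eq_mul, mul_one,
        sub_eq_iff_eq_add, zero_add]
      symm
      split_ifs with h
      · suffices #{a ∈ antidiagonal (n + 1) | i + 1 ∣ a.fst ∧ a.snd = i + 1} = 1 by
          simp only [Set.mem_setOf_eq]; convert congr_arg ((↑) : ℕ → α) this; norm_cast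
        rw [card_eq_one]
        cases' h with p hp
        refine ⟨((i + 1) * (p - 1), i + 1), ?_⟩
        ext ⟨a₁, a₂⟩
        simp only [mem_filter, Prod.mk.injEq, HasAntidiagonal.mem_antidiagonal, mem_singleton]
        constructor
        · rintro ⟨a_left, ⟨a, rfl⟩, rfl⟩
          refine ⟨?_, rfl⟩
          rw [Nat.mul_sub_left_distrib, ← hp, ← a_left, mul_one, Nat.add_sub_cancel]
        · rintro ⟨rfl, rfl⟩
          match p with
          | 0 => rw [mul_zero] at hp; cases hp
          | p + 1 => rw [hp]; simp [mul_add]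
      · suffices #{a ∈ antidiagonal (n + 1) | i + 1 ∣ a.fst ∧ a.snd = i + 1} = 0 by
          simp only [Set.mem_setOf_eq]; convert congr_arg ((↑) : ℕ → α) this; norm_cast
        rw [card_eq_zero]
        apply eq_empty_of_forall_notMem
        simp only [Prod.forall, mem_filter, not_and, HasAntidiagonal.mem_antidiagonal]
        rintro _ h₁ h₂ ⟨a, rfl⟩ rfl
        apply h
        simp [← h₂]
  · simp [zero_pow]

-- The main workhorse of the partition theorem proof.
theorem partialGF_prop (α : Type*) [CommSemiring α] (n : ℕ) (s : Finset ℕ) (hs : ∀ i ∈ s, 0 < i)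
    (c : ℕ → Set ℕ) (hc : ∀ i, i ∉ s → 0 ∈ c i) :
    #{p : n.Partition | (∀ j, p.parts.count j ∈ c j) ∧ ∀ j ∈ p.parts, j ∈ s} =
      coeff (R := α) n (∏ i ∈ s, indicatorSeries α ((· * i) '' c i)) := by
  simp_rw [coeff_prod, coeff_indicator, prod_boole, sum_boole]
  apply congr_arg
  simp only [mem_univ, forall_true_left, not_and, not_forall, exists_prop,
    Set.mem_image, not_exists]
  set φ : (a : Nat.Partition n) →
    a ∈ filter (fun p ↦ (∀ (j : ℕ), Multiset.count j p.parts ∈ c j) ∧ ∀ j ∈ p.parts, j ∈ s) univ →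
    ℕ →₀ ℕ := fun p _ => {
      toFun := fun i => Multiset.count i p.parts • i
      support := Finset.filter (fun i => i ≠ 0) p.parts.toFinset
      mem_support_toFun := fun a => by
        simp only [smul_eq_mul, ne_eq, mul_eq_zero, Multiset.count_eq_zero]
        rw [not_or, not_not]
        simp only [Multiset.mem_toFinset, not_not, mem_filter] }
  refine Finset.card_bij φ ?_ ?_ ?_
  · intro a ha
    simp only [φ, not_forall, not_exists, not_and, exists_prop, mem_filter]
    rw [mem_finsuppAntidiag]
    dsimp only [ne_eq, smul_eq_mul, id_eq, eq_mpr_eq_cast, le_eq_subset, Finsupp.coe_mk]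
    simp only [mem_univ, forall_true_left, not_and, not_forall, exists_prop,
      mem_filter, true_and] at ha
    refine ⟨⟨?_, fun i ↦ ?_⟩, fun i _ ↦ ⟨a.parts.count i, ha.1 i, rfl⟩⟩
    · conv_rhs => simp [← a.parts_sum]
      rw [sum_multiset_count_of_subset _ s]
      · simp only [smul_eq_mul]
      · intro i
        simp only [Multiset.mem_toFinset, not_not, mem_filter]
        apply ha.2
    · simp only [ne_eq, Multiset.mem_toFinset, not_not, mem_filter, and_imp]
      exact fun hi _ ↦ ha.2 i hi
  · intro p₁ hp₁ p₂ hp₂ h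
    apply Nat.Partition.ext
    simp only [true_and, mem_univ, mem_filter] at hp₁ hp₂
    ext i
    simp only [φ, ne_eq, Multiset.mem_toFinset, not_not, smul_eq_mul, Finsupp.mk.injEq] at h
    by_cases hi : i = 0
    · rw [hi]
      rw [Multiset.count_eq_zero_of_notMem]
      · rw [Multiset.count_eq_zero_of_notMem]
        intro a; exact Nat.lt_irrefl 0 (hs 0 (hp₂.2 0 a))
      intro a; exact Nat.lt_irrefl 0 (hs 0 (hp₁.2 0 a))
    · rw [← mul_left_inj' hi]
      rw [funext_iff] at h
      exact h.2 i
  · simp only [φ, mem_filter, mem_finsuppAntidiag, mem_univ, exists_prop, true_and, and_assoc]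
    rintro f ⟨hf, hf₃, hf₄⟩
    have hf' : f ∈ finsuppAntidiag s n := mem_finsuppAntidiag.mpr ⟨hf, hf₃⟩
    simp only [mem_finsuppAntidiag] at hf'
    refine ⟨⟨∑ i ∈ s, Multiset.replicate (f i / i) i, ?_, ?_⟩, ?_, ?_, ?_⟩
    · intro i hi
      simp only [exists_prop, Multiset.mem_sum, mem_map, Function.Embedding.coeFn_mk] at hi
      rcases hi with ⟨t, ht, z⟩
      apply hs
      rwa [Multiset.eq_of_mem_replicate z]
    · simp_rw [Multiset.sum_sum, Multiset.sum_replicate, Nat.nsmul_eq_mul]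
      rw [← hf'.1]
      refine sum_congr rfl fun i hi => Nat.div_mul_cancel ?_
      rcases hf₄ i hi with ⟨w, _, hw₂⟩
      rw [← hw₂]
      exact dvd_mul_left _ _
    · intro i
      simp_rw [Multiset.count_sum', Multiset.count_replicate, sum_ite_eq']
      split_ifs with h
      · rcases hf₄ i h with ⟨w, hw₁, hw₂⟩
        rwa [← hw₂, Nat.mul_div_cancel _ (hs i h)]
      · exact hc _ h
    · intro i hi
      rw [Multiset.mem_sum] at hi
      rcases hi with ⟨j, hj₁, hj₂⟩
      rwa [Multiset.eq_of_mem_replicate hj₂]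
    · ext i
      simp_rw [Multiset.count_sum', Multiset.count_replicate, sum_ite_eq']
      simp only [ne_eq, Multiset.mem_toFinset, not_not, smul_eq_mul, ite_mul,
        zero_mul, Finsupp.coe_mk]
      split_ifs with h
      · apply Nat.div_mul_cancel
        rcases hf₄ i h with ⟨w, _, hw₂⟩
        apply Dvd.intro_left _ hw₂
      · apply symm
        rw [← Finsupp.notMem_support_iff]
        exact notMem_mono hf'.2 h

theorem coeff_partialP (n m : ℕ) (h : n ≤ m) :
    coeff (R := ℂ) n (∏ i ∈ Finset.range m, (1 - (X : PowerSeries ℂ) ^ (i + 1))⁻¹) =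
      (Fintype.card (Nat.Partition n) : ℂ) := by
  have hprop := partialGF_prop ℂ n ((range m).map ⟨Nat.succ, Nat.succ_injective⟩)
    (by rintro i hi; rw [mem_map] at hi; obtain ⟨a, -, rfl⟩ := hi; exact Nat.succ_pos a)
    (fun _ => Set.univ) (fun _ _ => trivial)
  rw [Finset.prod_map] at hprop
  have heq : ∀ i : ℕ, ((· * ((⟨Nat.succ, Nat.succ_injective⟩ : ℕ ↪ ℕ) i)) ''
      (Set.univ : Set ℕ)) = {k | i + 1 ∣ k} := by
    intro i
    ext k
    simp only [Set.mem_image, Set.mem_univ, true_and, Set.mem_setOf_eq,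
      Function.Embedding.coeFn_mk, Nat.succ_eq_add_one]
    constructor
    · rintro ⟨p, rfl⟩; exact Dvd.intro_left p rfl
    · rintro ⟨p, rfl⟩; exact ⟨p, mul_comm _ _⟩
  simp_rw [heq, ← num_series'] at hprop
  rw [← hprop, Finset.filter_true_of_mem, Finset.card_univ]
  intro p _
  refine ⟨fun _ => trivial, fun j hj => ?_⟩
  have hj1 : 0 < j := p.parts_pos hj
  have hjn : j ≤ n := by
    simpa [p.parts_sum] using Multiset.single_le_sum (fun _ _ => Nat.zero_le _) _ hj
  simp only [mem_map, Function.Embedding.coeFn_mk, Nat.succ_eq_add_one, mem_range]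
  exact ⟨j - 1, by omega, by omega⟩

/-- the partition generating function -/
noncomputable def P : PowerSeries ℂ :=
  PowerSeries.mk fun n => (Fintype.card (Nat.Partition n) : ℂ)

theorem coeff_P (n : ℕ) : coeff (R := ℂ) n P = (Fintype.card (Nat.Partition n) : ℂ) :=
  coeff_mk _ _

theorem xqProd_one_mul_P : xqProd 1 * P = 1 := by
  ext n
  have h1 : EqUpTo n (xqProd 1) (∏ k ∈ Finset.range (n + 1), (1 - X ^ (k + 1))) := by
    have := xqProd_eqUpTo 1 n
    simpa only [map_one, one_mul] using this
  have h2 : EqUpTo n P (∏ k ∈ Finset.range (n + 1), (1 - (X : PowerSeries ℂ) ^ (k + 1))⁻¹) := by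
    intro i hi
    rw [coeff_P, coeff_partialP i (n + 1) (by omega)]
  rw [(h1.mul h2) n le_rfl, ← Finset.prod_mul_distrib,
    Finset.prod_eq_one fun i _ => PowerSeries.mul_inv_cancel _ (by simp)]

theorem main (N : ℕ) (hN : 1 ≤ N) (a : ℕ) (ha : a < N) :
    let ω : ℂ := Complex.exp (2 * Real.pi * Complex.I / N)
    let D : ℕ → ℂ := fun m => PowerSeries.coeff (R := ℂ) (m * N) (∏ j ∈ Finset.range N, xqProd (ω ^ j))
    let Z : ℕ → ℕ → ℂ := fun m p =>
      PowerSeries.coeff (R := ℂ) (m * N + p) (∏ j ∈ Finset.Ico 1 N, xqProd (ω ^ j))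
    D 0 = 1 ∧ Z 0 a = (Fintype.card (Nat.Partition a) : ℂ) ∧
      ∀ k : ℕ,
        (Fintype.card (Nat.Partition (k * N + a)) : ℂ) =
          Matrix.det (fun i j : Fin (k + 1) =>
            if (j : ℕ) = k then Z (i : ℕ) a
            else if (j : ℕ) ≤ (i : ℕ) then D ((i : ℕ) - (j : ℕ))
            else 0) := by
  intro ω D Z
  have hN0 : 0 < N := hN
  have hω : IsPrimitiveRoot ω N := Complex.isPrimitiveRoot_exp N (by omega)
  set F : PowerSeries ℂ := ∏ j ∈ Finset.range N, xqProd (ω ^ j) with hFdef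
  set G : PowerSeries ℂ := ∏ j ∈ Finset.Ico 1 N, xqProd (ω ^ j) with hGdef
  -- coefficients of F
  have hF_coeff : ∀ n, coeff (R := ℂ) n F =
      coeff (R := ℂ) n (∏ k ∈ Finset.range (n + 1), (1 - (X : PowerSeries ℂ) ^ ((k + 1) * N))) := by
    intro n
    have h1 := EqUpTo.prod (Finset.range N) (fun j => xqProd (ω ^ j))
      (fun j => ∏ k ∈ Finset.range (n + 1), (1 - C (R := ℂ) (ω ^ j) * X ^ (k + 1)))
      (fun j _ => xqProd_eqUpTo (ω ^ j) n)
    rw [h1 n le_rfl, Finset.prod_comm]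
    refine congrArg _ (Finset.prod_congr rfl fun k _ => ?_)
    exact ps_one_sub_prod hN0 hω (k + 1)
  have hFsupp : ∀ n, ¬ N ∣ n → coeff (R := ℂ) n F = 0 := by
    intro n hn
    rw [hF_coeff n]
    exact SuppN.prod _ _ (fun k _ => SuppN.one_sub_X_pow N (k + 1)) n hn
  have hD0 : D 0 = 1 := by
    show coeff (R := ℂ) (0 * N) F = 1
    rw [zero_mul, hF_coeff 0, Finset.prod_range_one, map_sub, coeff_one, if_pos rfl,
      coeff_X_pow, if_neg (by omega), sub_zero]
  -- F = E * G and G = F * P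
  have hFG : F = xqProd 1 * G := by
    rw [hFdef, Finset.range_eq_Ico, Finset.prod_eq_prod_Ico_succ_bot hN0, pow_zero]
  have hG : G = F * P := by
    calc G = G * (xqProd 1 * P) := by rw [xqProd_one_mul_P, mul_one]
    _ = F * P := by rw [hFG]; ring
  -- the recurrence
  have hrec : ∀ m, Z m a =
      ∑ s ∈ Finset.range (m + 1),
        D s * (Fintype.card (Nat.Partition ((m - s) * N + a)) : ℂ) := by
    intro m
    show coeff (R := ℂ) (m * N + a) G = _
    rw [hG, coeff_mul, Finset.Nat.sum_antidiagonal_eq_sum_range_succ_mk]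
    have hsub : (Finset.range (m + 1)).image (· * N) ⊆ Finset.range (m * N + a + 1) := by
      intro i hi
      simp only [Finset.mem_image, Finset.mem_range] at hi ⊢
      obtain ⟨s, hs, rfl⟩ := hi
      have : s * N ≤ m * N := Nat.mul_le_mul_right N (by omega)
      omega
    rw [← Finset.sum_subset hsub ?_]
    · rw [Finset.sum_image (fun x _ y _ h => by
        exact Nat.eq_of_mul_eq_mul_right hN0 h)]
      refine Finset.sum_congr rfl fun s hs => ?_
      rw [Finset.mem_range] at hs
      have h1 : m * N + a - s * N = (m - s) * N + a := by
        have h2 : s * N ≤ m * N := Nat.mul_le_mul_right N (by omega)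
        rw [Nat.sub_mul]
        omega
      show coeff (R := ℂ) (s * N) F * coeff (R := ℂ) (m * N + a - s * N) P = _
      rw [h1, coeff_P]
    · intro i hi hni
      rw [Finset.mem_range] at hi
      have : ¬ N ∣ i := by
        rintro ⟨t, rfl⟩
        refine hni ?_
        simp only [Finset.mem_image, Finset.mem_range]
        refine ⟨t, ?_, mul_comm t N⟩
        by_contra h
        have e1 : N * (m + 1) ≤ N * t := Nat.mul_le_mul_left N (by omega)
        have e2 : m * N = N * m := mul_comm m N
        have e3 : N * (m + 1) = N * m + N := by ring
        omega
      rw [hFsupp i this, zero_mul]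
  have hZ0 : Z 0 a = (Fintype.card (Nat.Partition a) : ℂ) := by
    rw [hrec 0, Finset.sum_range_one, hD0, one_mul]
    norm_num
  refine ⟨hD0, hZ0, fun k => ?_⟩
  -- determinant part
  set A : Matrix (Fin (k + 1)) (Fin (k + 1)) ℂ := fun i j =>
    if (j : ℕ) ≤ (i : ℕ) then D ((i : ℕ) - (j : ℕ)) else 0 with hA
  set B : Matrix (Fin (k + 1)) (Fin (k + 1)) ℂ := fun i j =>
    if (j : ℕ) = k then (Fintype.card (Nat.Partition ((i : ℕ) * N + a)) : ℂ)
    else if i = j then 1 else 0 with hB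
  have hM : (fun i j : Fin (k + 1) =>
      if (j : ℕ) = k then Z (i : ℕ) a
      else if (j : ℕ) ≤ (i : ℕ) then D ((i : ℕ) - (j : ℕ)) else 0) = A * B := by
    funext i j
    rw [Matrix.mul_apply]
    by_cases hj : (j : ℕ) = k
    · rw [if_pos hj, hrec (i : ℕ)]
      have hstep1 : ∀ l : Fin (k + 1), A i l * B l j =
          (if (l : ℕ) ≤ (i : ℕ) then D ((i : ℕ) - (l : ℕ)) else 0) *
            (Fintype.card (Nat.Partition ((l : ℕ) * N + a)) : ℂ) := by
        intro l
        simp only [hA, hB, if_pos hj]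
      rw [Finset.sum_congr rfl fun l _ => hstep1 l]
      rw [show (∑ l : Fin (k + 1), (if (l : ℕ) ≤ (i : ℕ) then D ((i : ℕ) - (l : ℕ)) else 0) *
            (Fintype.card (Nat.Partition ((l : ℕ) * N + a)) : ℂ)) =
          ∑ l ∈ Finset.range (k + 1), (if l ≤ (i : ℕ) then D ((i : ℕ) - l) else 0) *
            (Fintype.card (Nat.Partition (l * N + a)) : ℂ) from
        Fin.sum_univ_eq_sum_range (fun l => (if l ≤ (i : ℕ) then D ((i : ℕ) - l) else 0) *
          (Fintype.card (Nat.Partition (l * N + a)) : ℂ)) (k + 1)]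
      rw [← Finset.sum_subset (Finset.range_subset_range.2 (show (i : ℕ) + 1 ≤ k + 1 by
        have := i.isLt; omega)) ?_]
      · rw [← Finset.sum_range_reflect
          (fun sidx => D sidx * (Fintype.card (Nat.Partition (((i : ℕ) - sidx) * N + a)) : ℂ))
          ((i : ℕ) + 1)]
        refine Finset.sum_congr rfl fun l hl => ?_
        rw [Finset.mem_range] at hl
        rw [if_pos (show l ≤ (i : ℕ) by omega)]
        have h2 : (i : ℕ) + 1 - 1 - l = (i : ℕ) - l := by omega
        have h3 : (i : ℕ) - ((i : ℕ) - l) = l := by omega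
        rw [h2, h3]
      · intro l hl hnl
        rw [Finset.mem_range] at hl
        rw [Finset.mem_range] at hnl
        rw [if_neg (by omega), zero_mul]
    · rw [if_neg hj]
      have hstep : ∀ l : Fin (k + 1), A i l * B l j = if l = j then A i l else 0 := by
        intro l
        simp only [hA, hB, if_neg hj]
        by_cases h : l = j
        · rw [if_pos h, if_pos h, mul_one]
        · rw [if_neg h, if_neg h, mul_zero]
      rw [Finset.sum_congr rfl fun l _ => hstep l,
        Finset.sum_ite_eq' Finset.univ j (fun l => A i l), if_pos (Finset.mem_univ j)]
  have hdA : A.det = 1 := by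
    rw [Matrix.det_of_lowerTriangular A ?_]
    · refine Finset.prod_eq_one fun i _ => ?_
      simp only [hA]
      rw [if_pos le_rfl, Nat.sub_self]
      exact hD0
    · intro i j hij
      have hij' : (i : ℕ) < (j : ℕ) := hij
      simp only [hA]
      rw [if_neg (by omega)]
  have hdB : B.det = (Fintype.card (Nat.Partition (k * N + a)) : ℂ) := by
    rw [Matrix.det_of_upperTriangular ?_]
    · rw [Finset.prod_eq_single (Fin.last k)]
      · simp [hB]
      · intro b _ hb
        have hbk : (b : ℕ) ≠ k := fun h => hb (Fin.ext (by rw [h, Fin.val_last]))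
        simp [hB, hbk]
      · intro h
        exact absurd (Finset.mem_univ _) h
    · intro i j hij
      have hij' : (j : ℕ) < (i : ℕ) := hij
      have hik : (i : ℕ) < k + 1 := i.isLt
      simp only [hB]
      rw [if_neg (by omega), if_neg (fun h => by rw [h] at hij'; omega)]
  rw [hM, Matrix.det_mul, hdA, hdB, one_mul]


end PGD

/-- For `N ≥ 1`, `ω = e^{2πi/N}` and `0 ≤ a < N`, with
`∏_{j=0}^{N-1} (ω^j q)_∞ = ∑_m D_m q^{mN}` and
`∏_{j=1}^{N-1} (ω^j q)_∞ = ∑_{p=0}^{N-1} ∑_m Z_m^{(p)} q^{mN+p}`,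
one has `D₀ = 1`, `Z₀^{(a)} = p(a)`, and `p(kN + a)` equals the determinant of the
`(k+1) × (k+1)` matrix with `(i,j)` entry `D_{i-j}` for `j ≤ i` (and `0` for `j > i`)
in columns `j < k`, and last column `(Z₀^{(a)}, …, Z_k^{(a)})ᵀ`. -/
theorem partition_general_det (N : ℕ) (hN : 1 ≤ N) (a : ℕ) (ha : a < N) :
    let ω : ℂ := Complex.exp (2 * Real.pi * Complex.I / N)
    let D : ℕ → ℂ := fun m => PowerSeries.coeff (R := ℂ) (m * N) (∏ j ∈ Finset.range N, xqProd (ω ^ j))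
    let Z : ℕ → ℕ → ℂ := fun m p =>
      PowerSeries.coeff (R := ℂ) (m * N + p) (∏ j ∈ Finset.Ico 1 N, xqProd (ω ^ j))
    D 0 = 1 ∧ Z 0 a = (Fintype.card (Nat.Partition a) : ℂ) ∧
      ∀ k : ℕ,
        (Fintype.card (Nat.Partition (k * N + a)) : ℂ) =
          Matrix.det (fun i j : Fin (k + 1) =>
            if (j : ℕ) = k then Z (i : ℕ) a
            else if (j : ℕ) ≤ (i : ℕ) then D ((i : ℕ) - (j : ℕ))
            else 0) := by
  exact PGD.main N hN a ha
end
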